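/- arXiv:1705.08113 — 7 statements merged into one kernel-verified Lean document; each statement's English description precedes it below -/
import Mathlib

section
/- Define B_n(q) ∈ ℤ[q] by B_0(q)=1 and B_n(q) = Σ_{k=0}^{n−1} q^k [n−1 choose k]_q B_k(q) for n≥1. Then for every n, B_n(q) = Σ_σ q^{inv(σ)}, where the sum ranges over all permutations σ ∈ S_n avoiding the dashed pattern 1-32. -/
open Polynomial

/-- The Gaussian (q-)binomial coefficient `[m choose k]_q`, as a polynomial in `ℤ[q]`,
defined via the q-Pascal recursion `[m+1,k+1] = [m,k] + q^(k+1)·[m,k+1]`. -/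
noncomputable def qbinom : ℕ → ℕ → Polynomial ℤ
  | _, 0 => 1
  | 0, _ + 1 => 0
  | m + 1, k + 1 => qbinom m k + X ^ (k + 1) * qbinom m (k + 1)

/-- The q-Bell polynomial: `B₀(q) = 1`,
`B_n(q) = Σ_{k=0}^{n−1} q^k · [n−1 choose k]_q · B_k(q)`. -/
noncomputable def qBell : ℕ → Polynomial ℤ
  | 0 => 1
  | n + 1 => ∑ k ∈ (Finset.range (n + 1)).attach,
      X ^ (k : ℕ) * qbinom n (k : ℕ) * qBell (k : ℕ)
decreasing_by
  exact Finset.mem_range.mp k.2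

/-- The number of inversions of a word:
`inv(w) = #{(i,j) : i < j, w_i > w_j}` (0-based positions). -/
def invNum (w : List ℕ) : ℕ :=
  ∑ i ∈ Finset.range w.length, ∑ j ∈ Finset.range w.length,
    if i < j ∧ w.getD j 0 < w.getD i 0 then 1 else 0

/-- `w` avoids the dashed pattern `1-32`: there are no positions `p < q` with
`w_p < w_{q+1} < w_q` (0-based positions, `q+1` within the word). -/
def Avoids1dash32 (w : List ℕ) : Prop :=
  ¬ ∃ p q, p < q ∧ q + 1 < w.length ∧
      w.getD p 0 < w.getD (q + 1) 0 ∧ w.getD (q + 1) 0 < w.getD q 0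

section Aux
open List

def crossN (u v : List ℕ) : ℕ := (u.map fun x => v.countP fun y => decide (y < x)).sum

lemma countP_eq_sum (p : ℕ → Bool) (w : List ℕ) :
    w.countP p = ∑ j ∈ Finset.range w.length, if p (w.getD j 0) then 1 else 0 := by
  induction w with
  | nil => simp
  | cons a w ih =>
    rw [List.countP_cons, List.length_cons, Finset.sum_range_succ']
    simp only [List.getD_cons_succ, List.getD_cons_zero]
    rw [ih]

lemma invNum_cons (a : ℕ) (w : List ℕ) :
    invNum (a :: w) = w.countP (fun y => decide (y < a)) + invNum w := by
  unfold invNum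
  rw [List.length_cons, Finset.sum_range_succ']
  simp only [List.getD_cons_succ, List.getD_cons_zero]
  have h1 : (∑ i ∈ Finset.range w.length, ∑ j ∈ Finset.range (w.length + 1),
      if i + 1 < j ∧ (a :: w).getD j 0 < w.getD i 0 then 1 else 0)
      = ∑ i ∈ Finset.range w.length, ∑ j ∈ Finset.range w.length,
        if i < j ∧ w.getD j 0 < w.getD i 0 then 1 else 0 := by
    apply Finset.sum_congr rfl
    intro i _
    rw [Finset.sum_range_succ']
    simp only [List.getD_cons_succ, List.getD_cons_zero, Nat.succ_lt_succ_iff]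
    simp
  have h2 : (∑ j ∈ Finset.range (w.length + 1),
      if 0 < j ∧ (a :: w).getD j 0 < a then 1 else 0)
      = w.countP (fun y => decide (y < a)) := by
    rw [Finset.sum_range_succ', countP_eq_sum]
    simp only [List.getD_cons_succ, List.getD_cons_zero]
    simp
  rw [h1, h2]
  omega

lemma invNum_append (u v : List ℕ) :
    invNum (u ++ v) = invNum u + invNum v + crossN u v := by
  induction u with
  | nil => simp [invNum, crossN]
  | cons a u ih =>
    rw [List.cons_append, invNum_cons, invNum_cons, ih, List.countP_append]
    simp only [crossN, List.map_cons, List.sum_cons]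
    omega

lemma invNum_sorted (w : List ℕ) (h : w.Pairwise (· ≤ ·)) : invNum w = 0 := by
  induction w with
  | nil => simp [invNum]
  | cons a w ih =>
    rw [invNum_cons, ih h.of_cons]
    have : w.countP (fun y => decide (y < a)) = 0 := by
      rw [List.countP_eq_zero]
      intro y hy
      simp only [decide_eq_true_eq]
      exact not_lt.mpr (List.rel_of_pairwise_cons h hy)
    omega


lemma getD_mem_of_lt (l : List ℕ) {i : ℕ} (h : i < l.length) : l.getD i 0 ∈ l := by
  rw [List.getD_eq_getElem l 0 h]
  exact List.getElem_mem h

lemma sorted_le_iff_getD (l : List ℕ) :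
    l.Pairwise (· ≤ ·) ↔ ∀ j, j + 1 < l.length → l.getD j 0 ≤ l.getD (j + 1) 0 := by
  rw [← List.isChain_iff_pairwise, List.isChain_iff_getElem]
  constructor
  · intro h j hj
    have := h j (by omega)
    rw [List.getD_eq_getElem l 0 (show j < l.length by omega), List.getD_eq_getElem l 0 hj]
    simpa [List.get_eq_getElem] using this
  · intro h i hi
    have := h i (by omega)
    rw [List.getD_eq_getElem l 0 (show i < l.length by omega),
      List.getD_eq_getElem l 0 (show i + 1 < l.length by omega)] at this
    simpa [List.get_eq_getElem] using this

lemma avoid_decomp (α β : List ℕ) (m : ℕ)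
    (hα : ∀ x ∈ α, m < x) (hβ : ∀ x ∈ β, m < x) :
    Avoids1dash32 (α ++ m :: β) ↔ Avoids1dash32 α ∧ β.Pairwise (· ≤ ·) := by
  set w := α ++ m :: β with hw
  have hlen : w.length = α.length + (β.length + 1) := by simp [hw]
  have g1 : ∀ i < α.length, w.getD i 0 = α.getD i 0 := fun i hi =>
    List.getD_append _ _ _ _ hi
  have g2 : w.getD α.length 0 = m := by
    rw [List.getD_append_right _ _ _ _ le_rfl, Nat.sub_self, List.getD_cons_zero]
  have g3 : ∀ j, w.getD (α.length + 1 + j) 0 = β.getD j 0 := by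
    intro j
    rw [List.getD_append_right _ _ _ _ (by omega)]
    have : α.length + 1 + j - α.length = j + 1 := by omega
    rw [this, List.getD_cons_succ]
  constructor
  · intro H
    constructor
    · rintro ⟨p, q, hpq, hq, h1, h2⟩
      refine H ⟨p, q, hpq, by omega, ?_, ?_⟩
      · rw [g1 p (by omega), g1 (q+1) (by omega)]; exact h1
      · rw [g1 q (by omega), g1 (q+1) (by omega)]; exact h2
    · rw [sorted_le_iff_getD]
      intro j hj
      by_contra hlt
      push_neg at hlt
      refine H ⟨α.length, α.length + 1 + j, by omega, by omega, ?_, ?_⟩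
      · rw [g2, show α.length + 1 + j + 1 = α.length + 1 + (j + 1) by omega, g3]
        exact hβ _ (getD_mem_of_lt β hj)
      · rw [show α.length + 1 + j + 1 = α.length + 1 + (j + 1) by omega, g3, g3]
        exact hlt
  · rintro ⟨Hα, Hβ⟩ ⟨p, q, hpq, hq, h1, h2⟩
    rcases lt_trichotomy (q + 1) α.length with hc | hc | hc
    · refine Hα ⟨p, q, hpq, hc, ?_, ?_⟩
      · rw [← g1 p (by omega), ← g1 (q+1) (by omega)]; exact h1
      · rw [← g1 q (by omega), ← g1 (q+1) (by omega)]; exact h2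
    · rw [hc, g2] at h1
      rw [g1 p (by omega)] at h1
      have := hα _ (getD_mem_of_lt α (show p < α.length by omega))
      omega
    · rcases Nat.lt_or_ge α.length q with hq2 | hq2
      · obtain ⟨j, rfl⟩ : ∃ j, q = α.length + 1 + j := ⟨q - α.length - 1, by omega⟩
        rw [show α.length + 1 + j + 1 = α.length + 1 + (j + 1) by omega] at h2
        rw [g3, g3] at h2
        have := (sorted_le_iff_getD β).mp Hβ j (by omega)
        omega
      · have hqe : q = α.length := by omega
        rw [hqe, g2] at h2
        have g3' : w.getD (α.length + 1) 0 = β.getD 0 0 := g3 0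
        rw [g3'] at h2
        have : m < β.getD 0 0 := hβ _ (getD_mem_of_lt β (by omega))
        omega

def crossF (S U : Finset ℕ) : ℕ := ∑ x ∈ S, (U.filter (· < x)).card

lemma qbinom_zero (m : ℕ) : qbinom m 0 = 1 := by cases m <;> rfl

lemma crossQ (n : ℕ) : ∀ (T : Finset ℕ), T.card = n → ∀ k,
    ∑ S ∈ Finset.powersetCard k T, (X : Polynomial ℤ) ^ crossF S (T \ S) = qbinom n k := by
  induction n with
  | zero =>
    intro T hT k
    rw [Finset.card_eq_zero] at hT; subst hT
    cases k with
    | zero => simp [crossF, qbinom_zero]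
    | succ k =>
      rw [show Finset.powersetCard (k+1) (∅ : Finset ℕ) = ∅ by simp, Finset.sum_empty]
      rfl
  | succ n ih =>
    intro T hT k
    cases k with
    | zero => simp [crossF, qbinom_zero]
    | succ k =>
      have hne : T.Nonempty := by rw [← Finset.card_pos]; omega
      set m := T.min' hne with hm
      have hmT : m ∈ T := T.min'_mem hne
      set T' := T.erase m with hT'
      have hmm : m ∉ T' := Finset.notMem_erase _ _
      have hins : T = insert m T' := (Finset.insert_erase hmT).symm
      have hT'card : T'.card = n := by
        rw [hT', Finset.card_erase_of_mem hmT, hT]; rfl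
      have hmin : ∀ x ∈ T', m < x := fun x hx =>
        lt_of_le_of_ne (T.min'_le x (Finset.mem_of_mem_erase hx))
          (Ne.symm (Finset.ne_of_mem_erase hx))
      have hdisj : Disjoint (Finset.powersetCard (k+1) T')
          ((Finset.powersetCard k T').image (insert m)) := by
        rw [Finset.disjoint_left]
        intro S hS hS'
        rw [Finset.mem_powersetCard] at hS
        obtain ⟨S', hS', rfl⟩ := Finset.mem_image.mp hS'
        exact hmm (hS.1 (Finset.mem_insert_self m S'))
      rw [hins, Finset.powersetCard_succ_insert hmm, Finset.sum_union hdisj]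
      have sum1 : ∑ S ∈ Finset.powersetCard (k+1) T',
          (X : Polynomial ℤ) ^ crossF S (insert m T' \ S)
          = X ^ (k+1) * qbinom n (k+1) := by
        rw [← ih T' hT'card (k+1), Finset.mul_sum]
        apply Finset.sum_congr rfl
        intro S hS
        rw [Finset.mem_powersetCard] at hS
        have hmS : m ∉ S := fun h => hmm (hS.1 h)
        have hcompl : insert m T' \ S = insert m (T' \ S) :=
          Finset.insert_sdiff_of_notMem _ hmS
        have hstep : ∀ x ∈ S, ((insert m (T' \ S)).filter (· < x)).card
            = ((T' \ S).filter (· < x)).card + 1 := by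
          intro x hx
          rw [Finset.filter_insert, if_pos (hmin x (hS.1 hx)),
            Finset.card_insert_of_notMem
              (fun h => hmm (Finset.mem_sdiff.mp (Finset.mem_filter.mp h).1).1)]
        have hcr : crossF S (insert m T' \ S) = (k+1) + crossF S (T' \ S) := by
          rw [hcompl]
          unfold crossF
          rw [Finset.sum_congr rfl hstep, Finset.sum_add_distrib, Finset.sum_const,
            smul_eq_mul, mul_one, hS.2]
          omega
        rw [hcr, pow_add]
      have sum2 : ∑ S ∈ (Finset.powersetCard k T').image (insert m),
          (X : Polynomial ℤ) ^ crossF S (insert m T' \ S)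
          = qbinom n k := by
        rw [Finset.sum_image ?inj]
        case inj =>
          intro S1 h1 S2 h2 he
          rw [Finset.mem_coe, Finset.mem_powersetCard] at h1 h2
          have m1 : m ∉ S1 := fun h => hmm (h1.1 h)
          have m2 : m ∉ S2 := fun h => hmm (h2.1 h)
          rw [← Finset.erase_insert m1, ← Finset.erase_insert m2, he]
        rw [← ih T' hT'card k]
        apply Finset.sum_congr rfl
        intro S hS
        rw [Finset.mem_powersetCard] at hS
        have hmS : m ∉ S := fun h => hmm (hS.1 h)
        have hcompl : insert m T' \ insert m S = T' \ S := by
          ext x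
          simp only [Finset.mem_sdiff, Finset.mem_insert]
          constructor
          · rintro ⟨hx1 | hx1, hx2⟩
            · exact absurd (Or.inl hx1) hx2
            · exact ⟨hx1, fun h => hx2 (Or.inr h)⟩
          · rintro ⟨hx1, hx2⟩
            exact ⟨Or.inr hx1, fun h => h.elim (fun he => hmm (he ▸ hx1)) hx2⟩
        rw [hcompl]
        have : crossF (insert m S) (T' \ S) = crossF S (T' \ S) := by
          unfold crossF
          rw [Finset.sum_insert hmS]
          have : ((T' \ S).filter (· < m)).card = 0 := by
            rw [Finset.card_eq_zero, Finset.filter_eq_empty_iff]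
            intro x hx
            exact not_lt.mpr (le_of_lt (hmin x (Finset.mem_sdiff.mp hx).1))
          omega
        rw [this]
      rw [sum1, sum2]
      show _ = qbinom n k + X ^ (k + 1) * qbinom n (k + 1)
      ring

----------------------------------------------------------------
-- Part 4 : bookkeeping lemmas
----------------------------------------------------------------

lemma avoids_nil : Avoids1dash32 [] := by
  rintro ⟨p, q, _, hq, -, -⟩
  simp at hq

lemma toFinset_val_of_nodup {l : List ℕ} (h : l.Nodup) : l.toFinset.val = ↑l := by
  rw [← List.toFinset_coe, Multiset.toFinset_val,
    Multiset.dedup_eq_self.mpr (Multiset.coe_nodup.mpr h)]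

lemma perm_sort_toFinset {l : List ℕ} (h : l.Nodup) : l ~ l.toFinset.sort (· ≤ ·) := by
  rw [← Multiset.coe_eq_coe, Finset.sort_eq, toFinset_val_of_nodup h]

lemma sorted_lt_sort_toFinset {l : List ℕ} (h : l.Pairwise (· < ·)) :
    l.toFinset.sort (· ≤ ·) = l :=
  List.Perm.eq_of_pairwise' (Finset.pairwise_sort _ _) (h.imp le_of_lt) (perm_sort_toFinset h.nodup).symm

lemma takeWhile_decomp {w : List ℕ} {m : ℕ} (hm : m ∈ w) :
    w = w.takeWhile (fun x => decide (x ≠ m)) ++ m :: (w.dropWhile (fun x => decide (x ≠ m))).tail := by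
  induction w with
  | nil => cases hm
  | cons a w ih =>
    by_cases h : a = m
    · subst h
      simp [List.takeWhile_cons, List.dropWhile_cons]
    · have hm' : m ∈ w := by
        rcases List.mem_cons.mp hm with h1 | h1
        · exact absurd h1.symm h
        · exact h1
      have hd : (decide (a ≠ m)) = true := by simp [h]
      simp only [List.takeWhile_cons, List.dropWhile_cons, hd, if_true, List.cons_append]
      exact congrArg _ (ih hm')

lemma takeWhile_append_cons (α : List ℕ) (m : ℕ) (β : List ℕ) (h : ∀ x ∈ α, x ≠ m) :
    (α ++ m :: β).takeWhile (fun x => decide (x ≠ m)) = α := by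
  induction α with
  | nil => simp [List.takeWhile_cons]
  | cons a α ih =>
    have hd : (decide (a ≠ m)) = true := by simp [h a (List.mem_cons_self)]
    simp only [List.cons_append, List.takeWhile_cons, hd, if_true]
    rw [ih (fun x hx => h x (List.mem_cons_of_mem a hx))]

lemma crossN_cons (α β : List ℕ) (m : ℕ) (h : ∀ x ∈ α, m < x) :
    crossN α (m :: β) = crossN α β + α.length := by
  induction α with
  | nil => simp [crossN]
  | cons a α ih =>
    have ha : m < a := h a (List.mem_cons_self)
    have ih' := ih (fun x hx => h x (List.mem_cons_of_mem a hx))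
    simp only [crossN, List.map_cons, List.sum_cons, List.length_cons] at *
    rw [List.countP_cons]
    simp only [decide_eq_true_eq, ha, if_true]
    omega

lemma crossN_perm_left {α α' : List ℕ} (h : α ~ α') (v : List ℕ) : crossN α v = crossN α' v :=
  (h.map _).sum_eq

lemma countP_sort (U : Finset ℕ) (x : ℕ) :
    (U.sort (· ≤ ·)).countP (fun y => decide (y < x)) = (U.filter (· < x)).card := by
  rw [List.countP_eq_length_filter, Finset.card_def, Finset.filter_val,
    ← Finset.sort_eq U (· ≤ ·), Multiset.filter_coe, Multiset.coe_card]

lemma crossN_sort (S U : Finset ℕ) :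
    crossN (S.sort (· ≤ ·)) (U.sort (· ≤ ·)) = crossF S U := by
  have h := List.sum_toFinset (fun x => (U.filter (· < x)).card) (Finset.sort_nodup S (· ≤ ·))
  rw [Finset.sort_toFinset] at h
  unfold crossN crossF
  simp only [countP_sort]
  rw [← h]

noncomputable instance : DecidablePred Avoids1dash32 := fun _ => Classical.dec _

noncomputable def avoidFinset (l : List ℕ) : Finset (List ℕ) :=
  l.permutations.toFinset.filter Avoids1dash32

lemma mem_avoidFinset {w l : List ℕ} : w ∈ avoidFinset l ↔ w ~ l ∧ Avoids1dash32 w := by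
  rw [avoidFinset, Finset.mem_filter, List.mem_toFinset, List.mem_permutations]

noncomputable def qsum (l : List ℕ) : Polynomial ℤ :=
  ∑ w ∈ avoidFinset l, (X : Polynomial ℤ) ^ invNum w

----------------------------------------------------------------
-- Part 5 : the main theorem
----------------------------------------------------------------

lemma qsum_sorted : ∀ n (l : List ℕ), l.Pairwise (· < ·) → l.length = n → qsum l = qBell n := by
  intro n
  induction n using Nat.strong_induction_on with
  | _ n ih =>
  intro l hs hl
  cases l with
  | nil =>
    subst hl
    have he : avoidFinset [] = {[]} := by
      ext w
      rw [mem_avoidFinset, Finset.mem_singleton, List.perm_nil]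
      constructor
      · rintro ⟨h1, -⟩; exact h1
      · rintro rfl; exact ⟨rfl, avoids_nil⟩
    rw [qsum, he, Finset.sum_singleton]
    rw [show invNum [] = 0 by simp [invNum], pow_zero, qBell.eq_def]
    rfl
  | cons m t =>
    subst hl
    simp only [List.length_cons]
    have hm : ∀ x ∈ t, m < x := fun x hx => List.rel_of_pairwise_cons hs hx
    have hst : t.Pairwise (· < ·) := hs.of_cons
    have hnd : (m :: t).Nodup := hs.nodup
    have hndt : t.Nodup := (List.nodup_cons.mp hnd).2
    set T := t.toFinset with hT
    have hTt : T.sort (· ≤ ·) = t := sorted_lt_sort_toFinset hst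
    have hTcard : T.card = t.length := by
      rw [← Finset.length_sort (α := ℕ) (· ≤ ·) (s := T), hTt]
    have hTval : T.val = ↑t := toFinset_val_of_nodup hndt
    have hmT : ∀ x ∈ T, m < x := fun x hx => hm x (List.mem_toFinset.mp hx)
    -- value of inversions on decomposed words
    have hval_lemma : ∀ (S : Finset ℕ) (α : List ℕ), S ∈ T.powerset →
        α ∈ avoidFinset (S.sort (· ≤ ·)) →
        invNum (α ++ m :: ((T \ S).sort (· ≤ ·))) = invNum α + (S.card + crossF S (T \ S)) := by
      intro S α hS hα
      rw [mem_avoidFinset] at hα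
      obtain ⟨hperm, -⟩ := hα
      have hsub : S ⊆ T := Finset.mem_powerset.mp hS
      have hlt : ∀ x ∈ α, m < x := by
        intro x hx
        exact hmT x (hsub ((Finset.mem_sort (· ≤ ·)).mp (hperm.subset hx)))
      have hsorted : ((m :: ((T \ S).sort (· ≤ ·)))).Pairwise (· ≤ ·) := by
        rw [List.pairwise_cons]
        refine ⟨fun b hb => ?_, Finset.pairwise_sort _ _⟩
        exact le_of_lt (hmT b (Finset.mem_sdiff.mp ((Finset.mem_sort (· ≤ ·)).mp hb)).1)
      rw [invNum_append, invNum_sorted _ hsorted, crossN_cons _ _ _ hlt,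
        crossN_perm_left hperm, crossN_sort, hperm.length_eq,
        Finset.length_sort (· ≤ ·)]
      omega
    -- the decomposition bijection
    have key : qsum (m :: t)
        = ∑ x ∈ T.powerset.sigma (fun S => avoidFinset (S.sort (· ≤ ·))),
            (X : Polynomial ℤ) ^ (invNum x.2 + (x.1.card + crossF x.1 (T \ x.1))) := by
      rw [qsum]
      -- analysis of a member of avoidFinset (m :: t)
      have hA : ∀ w ∈ avoidFinset (m :: t),
          (w.takeWhile (fun x => decide (x ≠ m))).toFinset ∈ T.powerset ∧
          (w.takeWhile (fun x => decide (x ≠ m))) ∈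
            avoidFinset (((w.takeWhile (fun x => decide (x ≠ m))).toFinset).sort (· ≤ ·)) ∧
          w = (w.takeWhile (fun x => decide (x ≠ m))) ++
            m :: ((T \ (w.takeWhile (fun x => decide (x ≠ m))).toFinset).sort (· ≤ ·)) := by
        intro w hw
        rw [mem_avoidFinset] at hw
        obtain ⟨hperm, havd⟩ := hw
        have hmw : m ∈ w := hperm.mem_iff.mpr (List.mem_cons_self)
        set α := w.takeWhile (fun x => decide (x ≠ m)) with hαdef
        set β := (w.dropWhile (fun x => decide (x ≠ m))).tail with hβdef
        have hdec : w = α ++ m :: β := takeWhile_decomp hmw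
        have hwnd : w.Nodup := (hperm.nodup_iff).mpr hnd
        have hαm : ∀ x ∈ α, x ≠ m := fun x hx => by
          simpa using List.mem_takeWhile_imp hx
        have hsubw : ∀ x ∈ w, x = m ∨ x ∈ t := fun x hx => List.mem_cons.mp (hperm.subset hx)
        have hαt : ∀ x ∈ α, x ∈ t := by
          intro x hx
          have hxw : x ∈ w := by rw [hdec]; exact List.mem_append.mpr (Or.inl hx)
          rcases hsubw x hxw with h | h
          · exact absurd h (hαm x hx)
          · exact h
        have hαlt : ∀ x ∈ α, m < x := fun x hx => hm x (hαt x hx)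
        have hwnd' : (α ++ m :: β).Nodup := by rw [← hdec]; exact hwnd
        have hβm : m ∉ β := (List.nodup_cons.mp hwnd'.of_append_right).1
        have hβt : ∀ x ∈ β, x ∈ t := by
          intro x hx
          have hxw : x ∈ w := by
            rw [hdec]; exact List.mem_append.mpr (Or.inr (List.mem_cons_of_mem _ hx))
          rcases hsubw x hxw with h | h
          · exact absurd hx (h ▸ hβm)
          · exact h
        have hβlt : ∀ x ∈ β, m < x := fun x hx => hm x (hβt x hx)
        have hαnd : α.Nodup := hwnd'.of_append_left
        have hav : Avoids1dash32 α ∧ β.Pairwise (· ≤ ·) := by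
          rw [← avoid_decomp α β m hαlt hβlt, ← hdec]; exact havd
        have hlist : (α ++ β) ~ t := by
          have h1 : (α ++ m :: β) ~ m :: (α ++ β) := List.perm_middle
          have h2 : m :: (α ++ β) ~ m :: t := h1.symm.trans (hdec ▸ hperm)
          exact h2.cons_inv
        set S := α.toFinset with hSdef
        have hSsub : S ∈ T.powerset := by
          rw [Finset.mem_powerset]
          intro x hx
          exact List.mem_toFinset.mpr (hαt x (List.mem_toFinset.mp hx))
        have hSval : S.val = ↑α := toFinset_val_of_nodup hαnd
        have hβval : (↑β : Multiset ℕ) = T.val - S.val := by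
          have h1 : (↑α : Multiset ℕ) + ↑β = ↑t := by
            rw [Multiset.coe_add]; exact Multiset.coe_eq_coe.mpr hlist
          rw [hSval, hTval]
          exact eq_tsub_of_add_eq (by rw [add_comm]; exact h1)
        have hβeq : (T \ S).sort (· ≤ ·) = β := by
          apply List.Perm.eq_of_pairwise' (Finset.pairwise_sort _ _) hav.2
          rw [← Multiset.coe_eq_coe, Finset.sort_eq, Finset.sdiff_val, hβval]
        refine ⟨hSsub, ?_, ?_⟩
        · rw [mem_avoidFinset]
          exact ⟨perm_sort_toFinset hαnd, hav.1⟩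
        · rw [hβeq]; exact hdec
      refine Finset.sum_nbij'
        (fun w => (⟨(w.takeWhile (fun x => decide (x ≠ m))).toFinset,
                    w.takeWhile (fun x => decide (x ≠ m))⟩ : Σ _ : Finset ℕ, List ℕ))
        (fun x => x.2 ++ m :: ((T \ x.1).sort (· ≤ ·))) ?_ ?_ ?_ ?_ ?_
      · intro w hw
        exact Finset.mem_sigma.mpr ⟨(hA w hw).1, (hA w hw).2.1⟩
      · rintro ⟨S, α⟩ hx
        rw [Finset.mem_sigma] at hx
        obtain ⟨hS, hα⟩ := hx
        rw [mem_avoidFinset] at hα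
        obtain ⟨hperm, havd⟩ := hα
        have hsub : S ⊆ T := Finset.mem_powerset.mp hS
        have hαlt : ∀ x ∈ α, m < x := fun x hx =>
          hmT x (hsub ((Finset.mem_sort (· ≤ ·)).mp (hperm.subset hx)))
        have hβlt : ∀ x ∈ (T \ S).sort (· ≤ ·), m < x := fun x hx =>
          hmT x (Finset.mem_sdiff.mp ((Finset.mem_sort (· ≤ ·)).mp hx)).1
        rw [mem_avoidFinset]
        constructor
        · have h1 : (α ++ m :: ((T \ S).sort (· ≤ ·))) ~ m :: (α ++ (T \ S).sort (· ≤ ·)) :=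
            List.perm_middle
          refine h1.trans (List.Perm.cons m ?_)
          rw [← Multiset.coe_eq_coe, ← Multiset.coe_add, Finset.sort_eq, Finset.sdiff_val,
            ← toFinset_val_of_nodup (hperm.nodup_iff.mpr (Finset.sort_nodup _ _)),
            List.toFinset_eq_of_perm _ _ hperm, Finset.sort_toFinset, ← hTval]
          exact add_tsub_cancel_of_le (Finset.val_le_iff.mpr hsub)
        · rw [avoid_decomp _ _ _ hαlt hβlt]
          exact ⟨havd, Finset.pairwise_sort _ _⟩
      · intro w hw
        exact ((hA w hw).2.2).symm
      · rintro ⟨S, α⟩ hx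
        rw [Finset.mem_sigma] at hx
        obtain ⟨hS, hα⟩ := hx
        rw [mem_avoidFinset] at hα
        obtain ⟨hperm, -⟩ := hα
        have hsub : S ⊆ T := Finset.mem_powerset.mp hS
        have hαne : ∀ x ∈ α, x ≠ m := fun x hx =>
          ne_of_gt (hmT x (hsub ((Finset.mem_sort (· ≤ ·)).mp (hperm.subset hx))))
        have h1 : (α ++ m :: ((T \ S).sort (· ≤ ·))).takeWhile (fun x => decide (x ≠ m)) = α :=
          takeWhile_append_cons _ _ _ hαne
        have h2 : α.toFinset = S :=
          (List.toFinset_eq_of_perm _ _ hperm).trans (Finset.sort_toFinset _ _)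
        simp only [h1, h2]
      · intro w hw
        have h3 := (hA w hw).2.2
        conv_lhs => rw [h3]
        rw [hval_lemma _ _ (hA w hw).1 (hA w hw).2.1]
    rw [key, Finset.sum_sigma]
    have step2 : ∀ S ∈ T.powerset,
        (∑ α ∈ avoidFinset (S.sort (· ≤ ·)),
          (X : Polynomial ℤ) ^ (invNum α + (S.card + crossF S (T \ S))))
        = qBell S.card * X ^ (S.card + crossF S (T \ S)) := by
      intro S hS
      have hsplit : ∀ α ∈ avoidFinset (S.sort (· ≤ ·)),
          (X : Polynomial ℤ) ^ (invNum α + (S.card + crossF S (T \ S)))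
          = X ^ invNum α * X ^ (S.card + crossF S (T \ S)) := fun α _ => pow_add X _ _
      rw [Finset.sum_congr rfl hsplit, ← Finset.sum_mul]
      congr 1
      have hcard : S.card < t.length + 1 := by
        have := Finset.card_le_card (Finset.mem_powerset.mp hS)
        omega
      have := ih S.card (by simpa using hcard) (S.sort (· ≤ ·))
        ((Finset.sortedLT_sort S).pairwise) (Finset.length_sort (· ≤ ·))
      exact this
    rw [Finset.sum_congr rfl step2, Finset.sum_powerset]
    have step3 : ∀ k ∈ Finset.range (T.card + 1),
        (∑ S ∈ Finset.powersetCard k T, qBell S.card * X ^ (S.card + crossF S (T \ S)))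
        = X ^ k * qbinom t.length k * qBell k := by
      intro k hk
      have h1 : ∀ S ∈ Finset.powersetCard k T,
          qBell S.card * X ^ (S.card + crossF S (T \ S))
          = (X ^ k * qBell k) * X ^ crossF S (T \ S) := by
        intro S hS
        have hc : S.card = k := (Finset.mem_powersetCard.mp hS).2
        rw [hc, pow_add]; ring
      rw [Finset.sum_congr rfl h1, ← Finset.mul_sum, crossQ t.length T hTcard k]
      ring
    rw [Finset.sum_congr rfl step3, hTcard]
    rw [show qBell (t.length + 1) = ∑ k ∈ (Finset.range (t.length + 1)).attach,
      (X : Polynomial ℤ) ^ (k : ℕ) * qbinom t.length (k : ℕ) * qBell (k : ℕ) from by rw [qBell.eq_def]]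
    rw [Finset.sum_attach (Finset.range (t.length + 1))
      (fun k => (X : Polynomial ℤ) ^ k * qbinom t.length k * qBell k)]

end Aux

/-- `B_n(q) = Σ_σ q^(inv σ)`, the sum being over all permutations of `{1,…,n}`
(written as words) avoiding the dashed pattern `1-32`. -/
theorem qBell_eq_sum_inv_avoiders (n : ℕ) :
    qBell n =
      ∑ᶠ w ∈ {w : List ℕ | w.Perm ((List.range n).map (· + 1)) ∧ Avoids1dash32 w},
        (X : Polynomial ℤ) ^ invNum w := by
  have hs : ((List.range n).map (· + 1)).Pairwise (· < ·) := by
    rw [List.pairwise_map]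
    exact (List.pairwise_lt_range (n := n)).imp (fun h => by omega)
  have hset : {w : List ℕ | w.Perm ((List.range n).map (· + 1)) ∧ Avoids1dash32 w}
      = ↑(avoidFinset ((List.range n).map (· + 1))) := by
    ext w
    rw [Set.mem_setOf_eq, Finset.mem_coe, mem_avoidFinset]
  rw [hset, finsum_mem_coe_finset, ← qsum]
  rw [qsum_sorted ((List.range n).map (· + 1)).length _ hs rfl]
  simp
end

section
/- Let I=(i_1,…,i_r) be a composition of n. The map π ↦ π̂ is a bijection from the set of set partitions π of {1,…,n} with K(π)=I onto the set of permutations σ ∈ S_n that factor as σ = u_1 u_2 ⋯ u_r, where each u_j is a strictly increasing word of length i_j whose last letter is greater than every letter appearing to its right in σ. Moreover, every such permutation σ has descent composition C(σ)=I. -/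
/-- `π` is a set partition of `{1,…,n}`. -/
def IsSetPartitionOn (n : ℕ) (π : Finset (Finset ℕ)) : Prop :=
  (∀ B ∈ π, B.Nonempty) ∧
  (∀ B ∈ π, ∀ C ∈ π, B ≠ C → Disjoint B C) ∧
  (∀ x, x ∈ Finset.Icc 1 n ↔ ∃ B ∈ π, x ∈ B)

/-- Insert a block into a list of blocks sorted by decreasing maxima. -/
def insertByMax (B : Finset ℕ) : List (Finset ℕ) → List (Finset ℕ)
  | [] => [B]
  | C :: L => if C.max ≤ B.max then B :: C :: L else C :: insertByMax B L

/-- Sort a list of blocks by decreasing maxima. -/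
def sortByMax : List (Finset ℕ) → List (Finset ℕ)
  | [] => []
  | B :: L => insertByMax B (sortByMax L)

/-- The blocks of `π`, listed so that their maxima decrease. -/
noncomputable def blocksByMax (π : Finset (Finset ℕ)) : List (Finset ℕ) :=
  sortByMax π.toList

/-- `K(π)`: the composition formed by the block sizes of `π`, the blocks being ordered
so that their maxima decrease. -/
noncomputable def Kcomp (π : Finset (Finset ℕ)) : List ℕ :=
  (blocksByMax π).map Finset.card

/-- `π̂`: the word obtained by concatenating the blocks of `π` (ordered by decreasing
maxima), each block being listed increasingly. -/
noncomputable def hatWord (π : Finset (Finset ℕ)) : List ℕ :=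
  ((blocksByMax π).map (fun B => B.sort (· ≤ ·))).flatten

/-- The descent set of a word (with 1-based positions): `{i : 1 ≤ i ≤ n−1, wᵢ > wᵢ₊₁}`. -/
def desSet (w : List ℕ) : Finset ℕ :=
  (Finset.range w.length).filter (fun i => 0 < i ∧ w.getD i 0 < w.getD (i - 1) 0)

/-- The set of proper partial sums `i₁, i₁+i₂, …, i₁+⋯+i_{r−1}` of a composition:
having descent composition `I` means having this set as descent set. -/
def properSums (I : List ℕ) : Finset ℕ :=
  ((List.range (I.length - 1)).map (fun j => (I.take (j + 1)).sum)).toFinset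

/-- `w` factors as `u₁u₂⋯u_r` where `u_j` is a strictly increasing word of length `i_j`
whose last letter is greater than every letter to its right in `w`. -/
def GoodFact (I : List ℕ) (w : List ℕ) : Prop :=
  ∃ us : List (List ℕ), us.flatten = w ∧ us.map List.length = I ∧
    (∀ u ∈ us, u.Chain' (· < ·)) ∧
    (∀ j < us.length, ∀ l, (us.getD j []).getLast? = some l →
      ∀ x ∈ (us.drop (j + 1)).flatten, x < l)

/-- weak order on blocks by max -/
abbrev rMax (B C : Finset ℕ) : Prop := C.max ≤ B.max
/-- strict order on blocks by max -/
abbrev sMax (B C : Finset ℕ) : Prop := C.max < B.max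

instance : DecidableRel rMax := fun B C => inferInstanceAs (Decidable (C.max ≤ B.max))
instance : IsTotal (Finset ℕ) rMax := ⟨fun B C => le_total C.max B.max⟩
instance : IsTrans (Finset ℕ) rMax := ⟨fun _ _ _ h1 h2 => le_trans h2 h1⟩
instance : IsTrans (Finset ℕ) sMax := ⟨fun _ _ _ h1 h2 => lt_trans h2 h1⟩
instance : IsAntisymm (Finset ℕ) sMax := ⟨fun _ _ h1 h2 => absurd (lt_trans h1 h2) (lt_irrefl _)⟩

lemma insertByMax_eq (B : Finset ℕ) (L : List (Finset ℕ)) :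
    insertByMax B L = L.orderedInsert rMax B := by
  induction L with
  | nil => rfl
  | cons C L ih => simp [insertByMax, List.orderedInsert, rMax, ih]

lemma sortByMax_eq (L : List (Finset ℕ)) : sortByMax L = L.insertionSort rMax := by
  induction L with
  | nil => rfl
  | cons B L ih => simp [sortByMax, List.insertionSort, insertByMax_eq, ih]

lemma sortByMax_perm (L : List (Finset ℕ)) : (sortByMax L).Perm L := by
  rw [sortByMax_eq]; exact List.perm_insertionSort rMax L

lemma sortByMax_sorted (L : List (Finset ℕ)) : (sortByMax L).Pairwise rMax := by
  rw [sortByMax_eq]; exact List.pairwise_insertionSort rMax L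

lemma toFinset_eq_of_perm {l l' : List ℕ} (h : l.Perm l') : l.toFinset = l'.toFinset := by
  ext x; simp [h.mem_iff]

lemma toFinsetF_eq_of_perm {l l' : List (Finset ℕ)} (h : l.Perm l') : l.toFinset = l'.toFinset := by
  ext x; simp [h.mem_iff]

/-- a nodup-maxima, weakly sorted permutation of a strictly sorted list equals it -/
lemma sortByMax_eq_of_perm {L M : List (Finset ℕ)} (h : L.Perm M) (hM : M.Pairwise sMax) :
    sortByMax L = M := by
  have hperm : (sortByMax L).Perm M := (sortByMax_perm L).trans h
  refine List.Perm.eq_of_pairwise' ?_ hM hperm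
  -- upgrade weak sortedness to strict using distinct maxima from M
  have hmaxM : M.Pairwise (fun B C : Finset ℕ => B.max ≠ C.max) :=
    hM.imp (fun h => ne_of_gt h)
  have hmaxL : (sortByMax L).Pairwise (fun B C : Finset ℕ => B.max ≠ C.max) :=
    (hperm.pairwise_iff (fun h => Ne.symm h)).2 hmaxM
  exact (sortByMax_sorted L).and hmaxL |>.imp
    (fun ⟨h1, h2⟩ => lt_of_le_of_ne h1 (Ne.symm h2))

section P2
lemma le_getLast_of_sorted {l : List ℕ} (hl : l.Pairwise (· ≤ ·)) (h : l ≠ []) :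
    ∀ x ∈ l, x ≤ l.getLast h := by
  induction l with
  | nil => simp
  | cons a t ih =>
    intro x hx
    rcases List.mem_cons.1 hx with rfl | hx
    · cases t with
      | nil => simp [List.getLast]
      | cons b t' =>
        have hab : x ≤ b := (List.pairwise_cons.1 hl).1 b (by simp)
        have h2 := ih (List.pairwise_cons.1 hl).2 (by simp) b (by simp)
        rw [List.getLast_cons (by simp)]
        exact le_trans hab h2
    · cases t with
      | nil => simp at hx
      | cons b t' =>
        rw [List.getLast_cons (by simp)]
        exact ih (List.pairwise_cons.1 hl).2 (by simp) x hx

lemma chain'_lt_sorted {l : List ℕ} (h : l.Chain' (· < ·)) : l.Pairwise (· < ·) :=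
  List.isChain_iff_pairwise.1 h

lemma chain'_lt_nodup {l : List ℕ} (h : l.Chain' (· < ·)) : l.Nodup :=
  (chain'_lt_sorted h).imp (fun h => ne_of_lt h)

lemma chain'_lt_sorted_le {l : List ℕ} (h : l.Chain' (· < ·)) : l.Pairwise (· ≤ ·) :=
  (chain'_lt_sorted h).imp (fun h => le_of_lt h)

lemma max_toFinset_eq_getLast {l : List ℕ} (hs : l.Pairwise (· ≤ ·)) (h : l ≠ []) :
    l.toFinset.max = ↑(l.getLast h) := by
  have hne : l.toFinset.Nonempty := ⟨l.getLast h, by simp [List.getLast_mem]⟩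
  rw [← Finset.coe_max' hne]
  congr 1
  apply le_antisymm
  · exact Finset.max'_le _ _ _ (fun y hy => le_getLast_of_sorted hs h y (by simpa using hy))
  · exact Finset.le_max' _ _ (by simp [List.getLast_mem])

lemma sort_toFinset_eq {u : List ℕ} (hu : u.Chain' (· < ·)) :
    u.toFinset.sort (· ≤ ·) = u := by
  refine List.Perm.eq_of_pairwise' (Finset.pairwise_sort _ _) (chain'_lt_sorted_le hu) ?_
  refine List.perm_of_nodup_nodup_toFinset_eq (Finset.sort_nodup _ _) (chain'_lt_nodup hu) ?_
  rw [Finset.sort_toFinset]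

lemma chunks_unique : ∀ {us vs : List (List ℕ)}, us.map List.length = vs.map List.length →
    us.flatten = vs.flatten → us = vs := by
  intro us
  induction us with
  | nil => intro vs h _; cases vs <;> simp_all
  | cons u us ih =>
    intro vs h hf
    cases vs with
    | nil => simp_all
    | cons v vs =>
      simp only [List.map_cons, List.cons.injEq] at h
      simp only [List.flatten_cons] at hf
      obtain ⟨huv, hrest⟩ := List.append_inj hf h.1
      exact by rw [huv, ih h.2 hrest]

/-- The pairwise condition between factors. -/
def PFact (u v : List ℕ) : Prop := ∀ l, u.getLast? = some l → ∀ x ∈ v, x < l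

def TailCond (us : List (List ℕ)) : Prop :=
  ∀ j < us.length, ∀ l, (us.getD j []).getLast? = some l →
      ∀ x ∈ (us.drop (j + 1)).flatten, x < l

lemma tailCond_iff_pairwise {us : List (List ℕ)} :
    TailCond us ↔ us.Pairwise PFact := by
  constructor
  · intro h
    rw [List.pairwise_iff_getElem]
    intro i j hi hj hij l hl x hx
    refine h i (by omega) l ?_ x ?_
    · rwa [List.getD_eq_getElem _ _ hi]
    · rw [List.mem_flatten]
      refine ⟨us[j], ?_, hx⟩
      have : (us.drop (i+1))[j - (i+1)]'(by simp; omega) = us[j] := by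
        rw [List.getElem_drop]; congr 1; omega
      rw [← this]; exact List.getElem_mem _
  · intro h j hj l hl x hx
    rw [List.mem_flatten] at hx
    obtain ⟨v, hv, hxv⟩ := hx
    obtain ⟨k, hk, hkv⟩ := List.mem_iff_getElem.1 hv
    rw [List.getElem_drop] at hkv
    have hp := List.pairwise_iff_getElem.1 h j (j + 1 + k) hj (by simp at hk; omega) (by omega)
    rw [← List.getD_eq_getElem _ [] hj] at hp
    exact hp l hl x (hkv ▸ hxv)
end P2

section P3
variable {us : List (List ℕ)}

lemma blocks_sorted (h1 : ∀ u ∈ us, u ≠ []) (h2 : ∀ u ∈ us, u.Chain' (· < ·))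
    (h4 : TailCond us) : (us.map List.toFinset).Pairwise sMax := by
  rw [List.pairwise_map]
  refine (tailCond_iff_pairwise.1 h4).imp_of_mem ?_
  intro u v hu hv hp
  have hu0 := h1 u hu
  have hv0 := h1 v hv
  have hul := max_toFinset_eq_getLast (chain'_lt_sorted_le (h2 u hu)) hu0
  have hvl := max_toFinset_eq_getLast (chain'_lt_sorted_le (h2 v hv)) hv0
  have hlast : v.getLast hv0 < u.getLast hu0 :=
    hp (u.getLast hu0) (List.getLast?_eq_getLast hu0) (v.getLast hv0) (List.getLast_mem hv0)
  show v.toFinset.max < u.toFinset.max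
  rw [hul, hvl]
  exact_mod_cast hlast

lemma blocks_nodup (h1 : ∀ u ∈ us, u ≠ []) (h3 : us.flatten.Nodup) :
    (us.map List.toFinset).Nodup := by
  have hdisj : us.Pairwise List.Disjoint := (List.nodup_flatten.1 h3).2
  have husnd : us.Pairwise (fun u v => u.toFinset ≠ v.toFinset) := by
    refine hdisj.imp_of_mem ?_
    intro u v hu hv hd heq
    obtain ⟨a, ha⟩ := List.exists_mem_of_ne_nil u (h1 u hu)
    have hav : a ∈ v := by
      have : a ∈ v.toFinset := heq ▸ (List.mem_toFinset.2 ha)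
      simpa using this
    exact hd ha hav
  exact (List.pairwise_map).2 husnd

lemma blocksByMax_of_chunks (h1 : ∀ u ∈ us, u ≠ []) (h2 : ∀ u ∈ us, u.Chain' (· < ·))
    (h3 : us.flatten.Nodup) (h4 : TailCond us) :
    blocksByMax ((us.map List.toFinset).toFinset) = us.map List.toFinset := by
  have hs := blocks_sorted h1 h2 h4
  have hn := blocks_nodup h1 h3
  unfold blocksByMax
  refine sortByMax_eq_of_perm ?_ hs
  refine List.perm_of_nodup_nodup_toFinset_eq (Finset.nodup_toList _) hn ?_
  rw [Finset.toList_toFinset]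

lemma hatWord_of_chunks (h1 : ∀ u ∈ us, u ≠ []) (h2 : ∀ u ∈ us, u.Chain' (· < ·))
    (h3 : us.flatten.Nodup) (h4 : TailCond us) :
    hatWord ((us.map List.toFinset).toFinset) = us.flatten := by
  unfold hatWord
  rw [blocksByMax_of_chunks h1 h2 h3 h4, List.map_map]
  congr 1
  calc us.map ((fun B : Finset ℕ => B.sort (· ≤ ·)) ∘ List.toFinset)
      = us.map id := List.map_congr_left (fun u hu => sort_toFinset_eq (h2 u hu))
    _ = us := List.map_id us

lemma Kcomp_of_chunks (h1 : ∀ u ∈ us, u ≠ []) (h2 : ∀ u ∈ us, u.Chain' (· < ·))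
    (h3 : us.flatten.Nodup) (h4 : TailCond us) :
    Kcomp ((us.map List.toFinset).toFinset) = us.map List.length := by
  unfold Kcomp
  rw [blocksByMax_of_chunks h1 h2 h3 h4, List.map_map]
  exact List.map_congr_left (fun u hu => List.toFinset_card_of_nodup (chain'_lt_nodup (h2 u hu)))
end P3

section P4
variable {n : ℕ} {π : Finset (Finset ℕ)}

lemma mem_blocksByMax_iff {B : Finset ℕ} : B ∈ blocksByMax π ↔ B ∈ π := by
  rw [blocksByMax, (sortByMax_perm π.toList).mem_iff, Finset.mem_toList]

lemma blocksByMax_pairwise_disjoint (hπ : IsSetPartitionOn n π) :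
    (blocksByMax π).Pairwise (fun B C : Finset ℕ => Disjoint B C) := by
  have h0 : π.toList.Pairwise (· ≠ ·) := Finset.nodup_toList π
  have h1 : π.toList.Pairwise (fun B C => Disjoint B C) :=
    h0.imp_of_mem (fun hB hC hne =>
      hπ.2.1 _ (Finset.mem_toList.1 hB) _ (Finset.mem_toList.1 hC) hne)
  exact ((sortByMax_perm π.toList).pairwise_iff (fun h => h.symm)).2 h1

lemma blocksByMax_sorted_sMax (hπ : IsSetPartitionOn n π) :
    (blocksByMax π).Pairwise sMax := by
  have hw : (blocksByMax π).Pairwise rMax := sortByMax_sorted π.toList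
  have hd := blocksByMax_pairwise_disjoint hπ
  have hne : (blocksByMax π).Pairwise (fun B C : Finset ℕ => B.max ≠ C.max) := by
    refine hd.imp_of_mem ?_
    intro B C hB hC hdisj heq
    obtain ⟨m, hm⟩ := Finset.max_of_nonempty (hπ.1 B (mem_blocksByMax_iff.1 hB))
    exact (Finset.disjoint_left.1 hdisj (Finset.mem_of_max hm))
      (Finset.mem_of_max (heq ▸ hm))
  exact (hw.and hne).imp (fun h => lt_of_le_of_ne h.1 (Ne.symm h.2))

/-- The chunks associated to a partition. -/
noncomputable def chunksOf (π : Finset (Finset ℕ)) : List (List ℕ) :=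
  (blocksByMax π).map (fun B => B.sort (· ≤ ·))

lemma chunksOf_flatten : (chunksOf π).flatten = hatWord π := rfl

lemma chunksOf_lengths : (chunksOf π).map List.length = Kcomp π := by
  rw [chunksOf, Kcomp, List.map_map]
  exact List.map_congr_left (fun B _ => Finset.length_sort _)

lemma chunksOf_ne_nil (hπ : IsSetPartitionOn n π) : ∀ u ∈ chunksOf π, u ≠ [] := by
  intro u hu
  rw [chunksOf, List.mem_map] at hu
  obtain ⟨B, hB, rfl⟩ := hu
  have := hπ.1 B (mem_blocksByMax_iff.1 hB)
  rw [← Finset.card_pos] at this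
  intro hnil
  rw [← Finset.length_sort (· ≤ ·) (s := B), hnil] at this
  simp at this

lemma chunksOf_chain' : ∀ u ∈ chunksOf π, u.Chain' (· < ·) := by
  intro u hu
  rw [chunksOf, List.mem_map] at hu
  obtain ⟨B, _, rfl⟩ := hu
  exact List.isChain_iff_pairwise.2 (((Finset.pairwise_sort _ _).and (Finset.sort_nodup _ _)).imp (fun h => lt_of_le_of_ne h.1 h.2))

lemma chunksOf_nodup (hπ : IsSetPartitionOn n π) : (chunksOf π).flatten.Nodup := by
  rw [List.nodup_flatten]
  constructor
  · intro u hu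
    rw [chunksOf, List.mem_map] at hu
    obtain ⟨B, _, rfl⟩ := hu
    exact Finset.sort_nodup _ _
  · rw [chunksOf, List.pairwise_map]
    refine (blocksByMax_pairwise_disjoint hπ).imp ?_
    intro B C hd x hxB hxC
    exact Finset.disjoint_left.1 hd (by simpa using hxB) (by simpa using hxC)

lemma chunksOf_tailCond (hπ : IsSetPartitionOn n π) : TailCond (chunksOf π) := by
  rw [tailCond_iff_pairwise, chunksOf, List.pairwise_map]
  refine (blocksByMax_sorted_sMax hπ).imp_of_mem ?_
  intro B C _ _ hBC l hl x hx
  obtain ⟨ys, hys⟩ := List.getLast?_eq_some_iff.1 hl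
  have hBne : B.sort (· ≤ ·) ≠ [] := by rw [hys]; simp
  have hlast : l = (B.sort (· ≤ ·)).getLast hBne := by
    rw [List.getLast?_eq_getLast hBne] at hl
    exact (Option.some_injective _ hl).symm
  have hBmax : B.max = ↑l := by
    have := max_toFinset_eq_getLast (Finset.pairwise_sort B (· ≤ ·)) hBne
    rw [Finset.sort_toFinset] at this
    rw [this, hlast]
  have hxC : x ∈ C := by simpa using hx
  have : (↑x : WithBot ℕ) ≤ C.max := Finset.le_max hxC
  have hlt : (↑x : WithBot ℕ) < ↑l := lt_of_le_of_lt this (hBmax ▸ hBC)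
  exact_mod_cast hlt

lemma chunksOf_recover (hπ : IsSetPartitionOn n π) :
    ((chunksOf π).map List.toFinset).toFinset = π := by
  have : (chunksOf π).map List.toFinset = blocksByMax π := by
    rw [chunksOf, List.map_map]
    calc (blocksByMax π).map (List.toFinset ∘ fun B => B.sort (· ≤ ·))
        = (blocksByMax π).map id := List.map_congr_left (fun B _ => Finset.sort_toFinset _ _)
      _ = blocksByMax π := List.map_id _
  rw [this, blocksByMax, toFinsetF_eq_of_perm (sortByMax_perm π.toList), Finset.toList_toFinset]
end P4

section P5

lemma desSet_of_chain' {u : List ℕ} (hu : u.Chain' (· < ·)) : desSet u = ∅ := by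
  ext i
  simp only [desSet, Finset.mem_filter, Finset.mem_range, Finset.notMem_empty, iff_false]
  rintro ⟨hi, hpos, hlt⟩
  have h := List.pairwise_iff_getElem.1 (chain'_lt_sorted hu) (i-1) i (by omega) hi (by omega)
  rw [List.getD_eq_getElem _ _ hi, List.getD_eq_getElem _ _ (by omega : i - 1 < u.length)] at hlt
  exact absurd hlt (not_lt.2 (le_of_lt h))

lemma desSet_append {u w : List ℕ} (hu0 : u ≠ []) (hw0 : w ≠ [])
    (hu : u.Chain' (· < ·)) (hlt : w.getD 0 0 < u.getLast hu0) :
    desSet (u ++ w) = insert u.length ((desSet w).image (· + u.length)) := by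
  ext i
  simp only [desSet, Finset.mem_filter, Finset.mem_range, Finset.mem_insert, Finset.mem_image,
    List.length_append]
  have hkpos : 0 < u.length := List.length_pos_iff.2 hu0
  have hwpos : 0 < w.length := List.length_pos_iff.2 hw0
  constructor
  · rintro ⟨hi, hpos, hdes⟩
    rcases lt_trichotomy i u.length with h | h | h
    · exfalso
      rw [List.getD_append _ _ _ _ h, List.getD_append _ _ _ _ (by omega)] at hdes
      have hlt2 := List.pairwise_iff_getElem.1 (chain'_lt_sorted hu) (i-1) i (by omega) h
        (by omega)
      rw [List.getD_eq_getElem _ _ h, List.getD_eq_getElem _ _ (by omega : i - 1 < u.length)]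
        at hdes
      exact absurd hdes (not_lt.2 (le_of_lt hlt2))
    · exact Or.inl h
    · refine Or.inr ⟨i - u.length, ⟨by omega, by omega, ?_⟩, by omega⟩
      rw [List.getD_append_right _ _ _ _ (by omega), List.getD_append_right _ _ _ _ (by omega)]
        at hdes
      have e : i - 1 - u.length = i - u.length - 1 := by omega
      rwa [e] at hdes
  · rintro (rfl | ⟨i', ⟨hi', hpos', hdes'⟩, rfl⟩)
    · refine ⟨by omega, by omega, ?_⟩
      rw [List.getD_append_right _ _ _ _ (le_refl u.length), Nat.sub_self,
        List.getD_append _ _ _ _ (by omega : u.length - 1 < u.length)]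
      have e : u.getD (u.length - 1) 0 = u.getLast hu0 := by
        rw [List.getLast_eq_getElem, List.getD_eq_getElem _ _ (by omega)]
      rw [e]
      exact hlt
    · refine ⟨by omega, by omega, ?_⟩
      rw [List.getD_append_right _ _ _ _ (by omega), List.getD_append_right _ _ _ _ (by omega)]
      have e1 : i' + u.length - u.length = i' := by omega
      have e2 : i' + u.length - 1 - u.length = i' - 1 := by omega
      rw [e1, e2]
      exact hdes'

lemma properSums_cons {k : ℕ} {I : List ℕ} (hI : I ≠ []) :
    properSums (k :: I) = insert k ((properSums I).image (· + k)) := by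
  have hIl : 0 < I.length := List.length_pos_iff.2 hI
  ext x
  simp only [properSums, List.mem_toFinset, List.mem_map, List.mem_range, Finset.mem_insert,
    Finset.mem_image, List.length_cons]
  constructor
  · rintro ⟨j, hj, rfl⟩
    cases j with
    | zero => left; simp
    | succ j' =>
      right
      refine ⟨(I.take (j'+1)).sum, ⟨j', by omega, rfl⟩, ?_⟩
      rw [List.take_succ_cons, List.sum_cons, Nat.add_comm]
  · rintro (rfl | ⟨s, ⟨j', hj', rfl⟩, rfl⟩)
    · exact ⟨0, by omega, by simp⟩
    · exact ⟨j'+1, by omega, by rw [List.take_succ_cons, List.sum_cons, Nat.add_comm]⟩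

lemma desSet_flatten : ∀ {us : List (List ℕ)}, (∀ u ∈ us, u ≠ []) →
    (∀ u ∈ us, u.Chain' (· < ·)) → us.Pairwise PFact →
    desSet us.flatten = properSums (us.map List.length) := by
  intro us
  induction us with
  | nil => intro _ _ _; simp [desSet, properSums]
  | cons u vs ih =>
    intro h1 h2 hp
    cases vs with
    | nil =>
      simp only [List.flatten_cons, List.flatten_nil, List.append_nil, List.map_cons,
        List.map_nil]
      rw [desSet_of_chain' (h2 u (by simp))]
      simp [properSums]
    | cons v vs' =>
      have hu0 : u ≠ [] := h1 u (by simp)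
      have hv0 : v ≠ [] := h1 v (by simp)
      have hw0 : (v :: vs').flatten ≠ [] := by
        simp only [List.flatten_cons]
        intro h
        exact hv0 (List.append_eq_nil_iff.1 h).1
      have hpuv : PFact u v := (List.pairwise_cons.1 hp).1 v (by simp)
      have hlt : (v :: vs').flatten.getD 0 0 < u.getLast hu0 := by
        have h0 : (v :: vs').flatten.getD 0 0 = v.getD 0 0 := by
          rw [List.flatten_cons, List.getD_append _ _ _ _ (by simp [List.length_pos_iff.2 hv0])]
        rw [h0, List.getD_eq_getElem _ _ (by simp [List.length_pos_iff.2 hv0])]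
        exact hpuv _ (List.getLast?_eq_getLast hu0) _ (List.getElem_mem _)
      rw [List.flatten_cons, desSet_append hu0 hw0 (h2 u (by simp)) hlt,
        ih (fun x hx => h1 x (by simp [hx])) (fun x hx => h2 x (by simp [hx]))
          (List.pairwise_cons.1 hp).2,
        show (u::v::vs').map List.length = u.length :: (v::vs').map List.length from rfl,
        properSums_cons (by simp)]

lemma desSet_eq_properSums {I w : List ℕ} (hI : ∀ i ∈ I, 0 < i) (hg : GoodFact I w) :
    desSet w = properSums I := by
  obtain ⟨us, rfl, rfl, h2, h4⟩ := hg
  refine desSet_flatten ?_ h2 (tailCond_iff_pairwise.1 h4)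
  intro u hu hnil
  have := hI (u.length) (List.mem_map.2 ⟨u, hu, rfl⟩)
  simp [hnil] at this
end P5

/-- The map `π ↦ π̂` is a bijection from set partitions of `{1,…,n}` with `K(π) = I`
onto permutations of `{1,…,n}` admitting a good factorization of type `I`; moreover
every such permutation has descent composition `I`. -/
theorem hatWord_bijection (I : List ℕ) (hI : ∀ i ∈ I, 0 < i) :
    Set.BijOn hatWord
      {π : Finset (Finset ℕ) | IsSetPartitionOn I.sum π ∧ Kcomp π = I}
      {w : List ℕ | w.Perm ((List.range I.sum).map (· + 1)) ∧ GoodFact I w} ∧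
    (∀ w : List ℕ, w.Perm ((List.range I.sum).map (· + 1)) → GoodFact I w →
      desSet w = properSums I) := by
  have hmemrange : ∀ x, x ∈ (List.range I.sum).map (· + 1) ↔ 1 ≤ x ∧ x ≤ I.sum := by
    intro x
    simp only [List.mem_map, List.mem_range]
    constructor
    · rintro ⟨y, hy, rfl⟩; omega
    · rintro ⟨h1, h2⟩; exact ⟨x - 1, by omega, by omega⟩
  have hrangenodup : ((List.range I.sum).map (· + 1)).Nodup :=
    List.nodup_range.map (fun a b => by omega)
  refine ⟨⟨?_, ?_, ?_⟩, fun w _ hg => desSet_eq_properSums hI hg⟩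
  · -- MapsTo
    rintro π ⟨hπ, hK⟩
    constructor
    · -- perm
      refine List.perm_of_nodup_nodup_toFinset_eq ?_ hrangenodup ?_
      · rw [← chunksOf_flatten]; exact chunksOf_nodup hπ
      · ext x
        simp only [List.mem_toFinset]
        rw [hmemrange x, ← Finset.mem_Icc, hπ.2.2 x, ← chunksOf_flatten, List.mem_flatten]
        constructor
        · rintro ⟨u, hu, hxu⟩
          rw [chunksOf, List.mem_map] at hu
          obtain ⟨B, hB, rfl⟩ := hu
          exact ⟨B, mem_blocksByMax_iff.1 hB, by simpa using hxu⟩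
        · rintro ⟨B, hB, hxB⟩
          exact ⟨B.sort (· ≤ ·), List.mem_map.2 ⟨B, mem_blocksByMax_iff.2 hB, rfl⟩,
            by simpa using hxB⟩
    · -- GoodFact
      exact ⟨chunksOf π, chunksOf_flatten, by rw [chunksOf_lengths, hK], chunksOf_chain',
        chunksOf_tailCond hπ⟩
  · -- InjOn
    rintro π₁ ⟨hπ₁, hK₁⟩ π₂ ⟨hπ₂, hK₂⟩ h
    have hch : chunksOf π₁ = chunksOf π₂ := by
      refine chunks_unique ?_ ?_
      · rw [chunksOf_lengths, chunksOf_lengths, hK₁, hK₂]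
      · rw [chunksOf_flatten, chunksOf_flatten]; exact h
    rw [← chunksOf_recover hπ₁, ← chunksOf_recover hπ₂, hch]
  · -- SurjOn
    rintro w ⟨hperm, us, hflat, hlen, h2, h4⟩
    have h1 : ∀ u ∈ us, u ≠ [] := by
      intro u hu hnil
      have := hI u.length (hlen ▸ List.mem_map.2 ⟨u, hu, rfl⟩)
      simp [hnil] at this
    have h3 : us.flatten.Nodup := by
      rw [hflat]; exact hperm.nodup_iff.2 hrangenodup
    have h4' : TailCond us := h4
    refine ⟨(us.map List.toFinset).toFinset, ⟨⟨?_, ?_, ?_⟩, ?_⟩, ?_⟩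
    · -- blocks nonempty
      intro B hB
      rw [List.mem_toFinset, List.mem_map] at hB
      obtain ⟨u, hu, rfl⟩ := hB
      obtain ⟨a, ha⟩ := List.exists_mem_of_ne_nil u (h1 u hu)
      exact ⟨a, List.mem_toFinset.2 ha⟩
    · -- disjoint
      intro B hB C hC hne
      rw [List.mem_toFinset] at hB hC
      have hpd : (us.map List.toFinset).Pairwise (fun B C : Finset ℕ => Disjoint B C) := by
        rw [List.pairwise_map]
        refine ((List.nodup_flatten.1 h3).2).imp ?_
        intro u v hd
        rw [Finset.disjoint_left]
        intro a hau hav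
        exact hd (List.mem_toFinset.1 hau) (List.mem_toFinset.1 hav)
      haveI : Std.Symm (fun B C : Finset ℕ => Disjoint B C) := ⟨fun _ _ h => h.symm⟩
      exact hpd.forall hB hC hne
    · -- coverage
      intro x
      rw [Finset.mem_Icc, ← hmemrange x, ← hperm.mem_iff, ← hflat, List.mem_flatten]
      constructor
      · rintro ⟨u, hu, hxu⟩
        exact ⟨u.toFinset, List.mem_toFinset.2 (List.mem_map.2 ⟨u, hu, rfl⟩),
          List.mem_toFinset.2 hxu⟩
      · rintro ⟨B, hB, hxB⟩
        rw [List.mem_toFinset, List.mem_map] at hB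
        obtain ⟨u, hu, rfl⟩ := hB
        exact ⟨u, hu, List.mem_toFinset.1 hxB⟩
    · -- Kcomp
      rw [Kcomp_of_chunks h1 h2 h3 h4', hlen]
    · -- hatWord
      rw [hatWord_of_chunks h1 h2 h3 h4', hflat]
end

section
/- A permutation σ ∈ S_n admits a factorization σ = u_1 u_2 ⋯ u_r (for some r ≥ 1 and some lengths) into strictly increasing words u_j each of whose last letter is greater than every letter appearing to its right in σ, if and only if σ avoids the dashed pattern 21-3. -/
/-- `w` avoids the dashed pattern `21-3`: there are no positions `p, q` with
`q ≥ p + 2` and `w_{p+1} < w_p < w_q` (0-based positions). -/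
def Avoids21dash3 (w : List ℕ) : Prop :=
  ¬ ∃ p q, p + 2 ≤ q ∧ q < w.length ∧
      w.getD (p + 1) 0 < w.getD p 0 ∧ w.getD p 0 < w.getD q 0

/-- Structural version of avoidance (with strictness from nodup). -/
def StructLT (w : List ℕ) : Prop :=
  ∀ t₁ a b t₂, w = t₁ ++ a :: b :: t₂ → b < a → ∀ c ∈ t₂, c < a

lemma getD_at (t₁ : List ℕ) (a : ℕ) (r : List ℕ) :
    (t₁ ++ a :: r).getD t₁.length 0 = a := by
  simp [List.getD_eq_getElem?_getD, List.getElem?_append_right, List.getElem_append_right]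

lemma getD_at1 (t₁ : List ℕ) (a b : ℕ) (r : List ℕ) :
    (t₁ ++ a :: b :: r).getD (t₁.length + 1) 0 = b := by
  simp [List.getD_eq_getElem?_getD, List.getElem?_append_right, List.getElem_append_right]

lemma getD_at2 (t₁ : List ℕ) (a b : ℕ) (r : List ℕ) (i : ℕ) (h : i < r.length) :
    (t₁ ++ a :: b :: r).getD (t₁.length + 2 + i) 0 = r[i] := by
  rw [List.getD_eq_getElem?_getD, List.getElem?_append_right (by omega)]
  have : t₁.length + 2 + i - t₁.length = i + 2 := by omega
  rw [this]
  simp [List.getElem?_eq_getElem, h]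

/-- From avoidance and nodup, get the structural strict property. -/
lemma structLT_of_avoids (w : List ℕ) (hnd : w.Nodup) (hav : Avoids21dash3 w) :
    StructLT w := by
  intro t₁ a b t₂ hw hba c hc
  obtain ⟨i, hi, rfl⟩ := List.getElem_of_mem hc
  rcases lt_trichotomy t₂[i] a with h | h | h
  · exact h
  · exfalso
    subst hw
    have := hnd.sublist (List.sublist_append_right t₁ _)
    rw [List.nodup_cons] at this
    exact this.1 (by rw [← h]; exact List.mem_cons_of_mem _ hc)
  · exfalso
    apply hav
    refine ⟨t₁.length, t₁.length + 2 + i, by omega, ?_, ?_, ?_⟩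
    · subst hw; simp only [List.length_append, List.length_cons]; omega
    · subst hw; rw [getD_at1, getD_at]; exact hba
    · subst hw; rw [getD_at, getD_at2 _ _ _ _ _ hi]; exact h

/-- From a factorization, the structural strict property. -/
lemma structLT_of_fact (us : List (List ℕ)) (hne : ∀ u ∈ us, u ≠ [])
    (hch : ∀ u ∈ us, u.Chain' (· < ·))
    (hdom : ∀ j < us.length, ∀ l, (us.getD j []).getLast? = some l →
        ∀ x ∈ (us.drop (j + 1)).flatten, x < l) :
    StructLT us.flatten := by
  induction us with
  | nil => intro t₁ a b t₂ hw; simp at hw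
  | cons u us' ih =>
    have ihne : ∀ v ∈ us', v ≠ [] := fun v hv => hne v (List.mem_cons_of_mem _ hv)
    have ihch : ∀ v ∈ us', v.Chain' (· < ·) := fun v hv => hch v (List.mem_cons_of_mem _ hv)
    have ihdom : ∀ j < us'.length, ∀ l, (us'.getD j []).getLast? = some l →
        ∀ x ∈ (us'.drop (j + 1)).flatten, x < l := fun j hj l hl x hx =>
      hdom (j+1) (by simpa using Nat.succ_lt_succ hj) l (by simpa using hl) x (by simpa using hx)
    intro t₁ a b t₂ hw hba c hc
    rw [List.flatten_cons] at hw
    rcases List.append_eq_append_iff.mp hw with ⟨a', ht₁, hv⟩ | ⟨c', hu, hv⟩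
    · exact ih ihne ihch ihdom a' a b t₂ hv hba c hc
    · cases c' with
      | nil => exact ih ihne ihch ihdom [] a b t₂ (by simpa [hu] using hv.symm) hba c hc
      | cons x c' =>
       cases c' with
       | cons y c'' =>
        simp only [List.cons_append, List.cons.injEq] at hv
        obtain ⟨rfl, rfl, hv⟩ := hv
        exfalso
        have hcu : u.Chain' (· < ·) := hch u List.mem_cons_self
        rw [hu] at hcu
        have hab : a < b :=
          (List.isChain_cons_cons.mp ((List.isChain_append.mp hcu).2.1)).1
        omega
       | nil =>
        simp only [List.cons_append, List.nil_append, List.cons.injEq] at hv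
        obtain ⟨rfl, hv⟩ := hv
        have hlast : u.getLast? = some a := by
          rw [hu, List.getLast?_append_cons]; rfl
        refine hdom 0 (by simp) a (by simpa using hlast) c ?_
        show c ∈ us'.flatten
        rw [← hv]
        exact List.mem_cons_of_mem _ hc

/-- From nodup + structural strict property, construct a factorization. -/
lemma fact_of_structLT : ∀ w : List ℕ, w.Nodup → StructLT w →
    ∃ us : List (List ℕ), us.flatten = w ∧ (∀ u ∈ us, u ≠ []) ∧
      (∀ u ∈ us, u.Chain' (· < ·)) ∧
      (∀ j < us.length, ∀ l, (us.getD j []).getLast? = some l →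
        ∀ x ∈ (us.drop (j + 1)).flatten, x < l) := by
  intro w
  induction w with
  | nil => intro _ _; exact ⟨[], by simp⟩
  | cons a w' ih =>
    intro hnd hst
    have hnd' : w'.Nodup := (List.nodup_cons.mp hnd).2
    have hst' : StructLT w' := by
      intro t₁ p q t₂ hw hqp c hc
      exact hst (a :: t₁) p q t₂ (by simp [hw]) hqp c hc
    obtain ⟨us', hfl, hne', hch', hdom'⟩ := ih hnd' hst'
    match us', hfl with
    | [], hfl =>
      refine ⟨[[a]], by simp [← hfl], by simp, by simp [List.Chain'], ?_⟩
      intro j hj l hl x hx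
      simp at hj; subst hj
      simp at hx
    | u :: rest, hfl =>
      have hune : u ≠ [] := hne' u List.mem_cons_self
      match u, hune with
      | h :: tu, _ =>
      by_cases hah : a < h
      · -- prepend a to the first run
        refine ⟨(a :: h :: tu) :: rest, by simp [← hfl], ?_, ?_, ?_⟩
        · intro v hv
          rcases List.mem_cons.mp hv with rfl | hv
          · simp
          · exact hne' v (List.mem_cons_of_mem _ hv)
        · intro v hv
          rcases List.mem_cons.mp hv with rfl | hv
          · exact List.isChain_cons_cons.mpr ⟨hah, hch' _ List.mem_cons_self⟩
          · exact hch' v (List.mem_cons_of_mem _ hv)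
        · intro j hj l hl x hx
          match j with
          | 0 =>
            refine hdom' 0 (by simp) l ?_ x (by simpa using hx)
            simpa [List.getLast?_cons_cons] using hl
          | j + 1 =>
            exact hdom' (j+1) (by simpa using hj) l (by simpa using hl) x (by simpa using hx)
      · -- start a new singleton run [a]
        have haw' : a ∉ w' := (List.nodup_cons.mp hnd).1
        have hhw' : h ∈ w' := by rw [← hfl]; simp
        have hha : h < a := by
          rcases lt_trichotomy a h with h1 | h1 | h1
          · exact absurd h1 hah
          · exact absurd (h1 ▸ hhw') haw'
          · exact h1
        have hall : ∀ x ∈ w', x < a := by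
          have hw'eq : w' = h :: (tu ++ rest.flatten) := by simp [← hfl]
          intro x hx
          rw [hw'eq] at hx
          rcases List.mem_cons.mp hx with rfl | hx
          · exact hha
          · exact hst [] a h (tu ++ rest.flatten) (by simp [hw'eq]) hha x hx
        refine ⟨[a] :: (h :: tu) :: rest, by simp [← hfl], ?_, ?_, ?_⟩
        · intro v hv
          rcases List.mem_cons.mp hv with rfl | hv
          · simp
          · exact hne' v hv
        · intro v hv
          rcases List.mem_cons.mp hv with rfl | hv
          · exact List.isChain_singleton _
          · exact hch' v hv
        · intro j hj l hl x hx
          match j with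
          | 0 =>
            rw [List.getD_cons_zero] at hl
            have hl' : a = l := Option.some.inj hl
            subst hl'
            have hx' : x ∈ ((h :: tu) :: rest).flatten := hx
            rw [hfl] at hx'
            exact hall x hx'
          | j + 1 =>
            exact hdom' j (by simpa using hj) l (by simpa using hl) x (by simpa using hx)

/-- A permutation of `{1,…,n}` (written as a word) factors as a concatenation of
strictly increasing nonempty words, the last letter of each being greater than every
letter to its right, if and only if it avoids the dashed pattern `21-3`. -/
theorem factorization_iff_avoids21dash3 (n : ℕ) (w : List ℕ)
    (hw : w.Perm ((List.range n).map (· + 1))) :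
    (∃ us : List (List ℕ), us.flatten = w ∧ (∀ u ∈ us, u ≠ []) ∧
      (∀ u ∈ us, u.Chain' (· < ·)) ∧
      (∀ j < us.length, ∀ l, (us.getD j []).getLast? = some l →
        ∀ x ∈ (us.drop (j + 1)).flatten, x < l)) ↔
    Avoids21dash3 w := by
  have hnd : w.Nodup := hw.nodup_iff.mpr
    ((List.nodup_range (n := n)).map (fun x y h => by omega))
  constructor
  · rintro ⟨us, hflat, hne, hch, hdom⟩
    rintro ⟨p, q, hpq, hq, h1, h2⟩
    have hst : StructLT w := hflat ▸ structLT_of_fact us hne hch hdom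
    clear hflat hw hnd
    have hp1 : p + 1 < w.length := by omega
    have hdec : w = w.take p ++ w.getD p 0 :: w.getD (p+1) 0 :: w.drop (p+2) := by
      have e1 : w.getD p 0 = w[p]'(by omega) := by
        simp [List.getD_eq_getElem?_getD, List.getElem?_eq_getElem (show p < w.length by omega)]
      have e2 : w.getD (p+1) 0 = w[p+1]'(by omega) := by
        simp [List.getD_eq_getElem?_getD, List.getElem?_eq_getElem hp1]
      have d1 : w.drop p = w[p]'(by omega) :: w[p+1] :: w.drop (p+2) := by
        rw [List.drop_eq_getElem_cons (show p < w.length by omega)]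
        congr 1
        exact List.drop_eq_getElem_cons hp1
      rw [e1, e2, ← d1]
      exact (List.take_append_drop p w).symm
    have hcmem : w.getD q 0 ∈ w.drop (p + 2) := by
      have hq2 : q - (p+2) < (w.drop (p+2)).length := by simp [List.length_drop]; omega
      have : (w.drop (p+2))[q - (p+2)] = w[q]'hq := by
        rw [List.getElem_drop]; congr 1; omega
      have hg : w.getD q 0 = w[q]'hq := by
        simp [List.getD_eq_getElem?_getD, List.getElem?_eq_getElem hq]
      rw [hg, ← this]
      exact List.getElem_mem _
    have := hst (w.take p) (w.getD p 0) (w.getD (p+1) 0) (w.drop (p+2)) hdec h1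
      (w.getD q 0) hcmem
    omega
  · intro hav
    exact fact_of_structLT w hnd (structLT_of_avoids w hnd hav)
end

section
/- For all nonempty words u and v over an alphabet, the following identity holds in the free ℤ-module spanned by all words: u ≺′ v = Σ_{(v_1,v_2) : v = v_1 v_2} (−1)^{|v_1|} ((rev(v_1)·u) ⧢ v_2), where the sum is over all factorizations of v into two (possibly empty) factors, rev denotes word reversal, |·| denotes length, and · denotes concatenation. -/
/-- The shuffle product of two words, as a multiset of words. -/
def sh {α : Type*} : List α → List α → Multiset (List α)
  | [], v => {v}
  | u, [] => {u}
  | a :: u, b :: v => ((sh u (b :: v)).map (a :: ·)) + ((sh (a :: u) v).map (b :: ·))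
termination_by u v => u.length + v.length
decreasing_by all_goals (simp [List.length_cons]; try omega)


lemma sh_nil {α : Type*} (u : List α) : sh u [] = {u} := by
  cases u <;> simp [sh]

lemma sh_cons_cons {α : Type*} (a b : α) (u v : List α) :
    sh (a :: u) (b :: v) = ((sh u (b :: v)).map (a :: ·)) + ((sh (a :: u) v).map (b :: ·)) := by
  rw [sh]

/-- A multiset of words, seen as an element of the free `ℤ`-module spanned by words. -/
noncomputable def ofM {α : Type*} (m : Multiset (List α)) : (List α) →₀ ℤ :=
  (m.map (fun w => Finsupp.single w (1 : ℤ))).sum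


lemma ofM_add {α : Type*} (m n : Multiset (List α)) : ofM (m + n) = ofM m + ofM n := by
  simp [ofM]

lemma left_half_shuffle_aux {α : Type*} (v : List α) : ∀ (a : α) (u' : List α),
    ofM ((sh u' v).map (a :: ·)) =
      ∑ k ∈ Finset.range (v.length + 1),
        ((-1 : ℤ) ^ k) • ofM (sh ((v.take k).reverse ++ a :: u') (v.drop k)) := by
  induction v with
  | nil =>
    intro a u'
    simp [sh_nil, ofM]
  | cons b v' ih =>
    intro a u'
    have hrec : ofM (sh (a :: u') (b :: v')) =
        ofM ((sh u' (b :: v')).map (a :: ·)) + ofM ((sh (a :: u') v').map (b :: ·)) := by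
      rw [sh_cons_cons, ofM_add]
    rw [Finset.sum_range_succ']
    simp only [List.take_succ_cons, List.drop_succ_cons, List.length_cons, List.take_zero,
      List.drop_zero, List.reverse_cons, List.reverse_nil, List.nil_append, List.cons_append,
      List.append_assoc, pow_zero, one_smul, pow_succ]
    have := ih b (a :: u')
    simp only [mul_neg_one, neg_smul, Finset.sum_neg_distrib, hrec, this]
    abel

/-- For nonempty words `u = a·u'` and `v`, the left half-shuffle
`u ≺′ v = a(u' ⧢ v)` satisfies
`u ≺′ v = Σ_{v₁v₂ = v} (−1)^{|v₁|} ((rev(v₁)·u) ⧢ v₂)`. -/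
theorem left_half_shuffle_identity {α : Type*} (a : α) (u' v : List α) (hv : v ≠ []) :
    ofM ((sh u' v).map (a :: ·)) =
      ∑ k ∈ Finset.range (v.length + 1),
        ((-1 : ℤ) ^ k) • ofM (sh ((v.take k).reverse ++ a :: u') (v.drop k)) := by
  exact left_half_shuffle_aux v a u'
end

section
/- For all nonempty words u and v over an alphabet, the following identity holds in the free ℤ-module spanned by all words: u ≻′ v = Σ_{(u_1,u_2) : u = u_1 u_2} (−1)^{|u_1|} (u_2 ⧢ (rev(u_1)·v)), where the sum is over all factorizations of u into two (possibly empty) factors, rev denotes word reversal, |·| denotes length, and · denotes concatenation. -/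
lemma key_identity {α : Type*} (u : List α) (b : α) (v' : List α) :
    ofM ((sh u v').map (b :: ·)) =
      ∑ k ∈ Finset.range (u.length + 1),
        ((-1 : ℤ) ^ k) • ofM (sh (u.drop k) ((u.take k).reverse ++ b :: v')) := by
  induction u generalizing b v' with
  | nil => simp [sh, ofM]
  | cons a u' ih =>
    have hsh : sh (a :: u') (b :: v')
        = ((sh u' (b :: v')).map (a :: ·)) + ((sh (a :: u') v').map (b :: ·)) := by
      rw [sh]
    rw [Finset.sum_range_succ']
    have hstep : ∀ i,
        ((-1 : ℤ) ^ (i + 1)) • ofM (sh ((a :: u').drop (i + 1))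
            (((a :: u').take (i + 1)).reverse ++ b :: v'))
        = -(((-1 : ℤ) ^ i) • ofM (sh (u'.drop i) ((u'.take i).reverse ++ a :: b :: v'))) := by
      intro i
      simp [pow_succ, List.reverse_cons, List.append_assoc, neg_smul, mul_comm]
    simp only [List.length_cons, hstep, Finset.sum_neg_distrib]
    rw [← Finset.sum_neg_distrib] at *
    rw [Finset.sum_neg_distrib, ← ih a (b :: v')]
    simp only [List.drop_zero, List.take_zero, List.reverse_nil, List.nil_append, pow_zero,
      one_smul, hsh, ofM_add]
    abel

/-- For nonempty words `u` and `v = b·v'`, the right half-shuffle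
`u ≻′ v = b(u ⧢ v')` satisfies
`u ≻′ v = Σ_{u₁u₂ = u} (−1)^{|u₁|} (u₂ ⧢ (rev(u₁)·v))`. -/
theorem right_half_shuffle_identity {α : Type*} (u : List α) (hu : u ≠ [])
    (b : α) (v' : List α) :
    ofM ((sh u v').map (b :: ·)) =
      ∑ k ∈ Finset.range (u.length + 1),
        ((-1 : ℤ) ^ k) • ofM (sh (u.drop k) ((u.take k).reverse ++ b :: v')) := by
  exact key_identity u b v'
end

section
/- Let k,ℓ ≥ 1, let σ, σ′ ∈ S_k have the same descent set, and let τ, τ′ ∈ S_ℓ have the same descent set. For a k-element subset P of {1,…,k+ℓ}, let w(σ,τ,P) denote the word of length k+ℓ whose letters at the positions of P, read left to right, are σ(1),…,σ(k), and whose letters at the remaining positions, read left to right, are τ(1)+k,…,τ(ℓ)+k. Then for every k-element subset P of {1,…,k+ℓ}, the words w(σ,τ,P) and w(σ′,τ′,P) have the same descent set. -/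
def interleave (σ τ : List ℕ) (P : Finset ℕ) : List ℕ :=
  (List.range (σ.length + τ.length)).map (fun i =>
    if i ∈ P then σ.getD ((P.filter (· < i)).card) 0
    else τ.getD (((Finset.range (σ.length + τ.length) \ P).filter (· < i)).card) 0
      + σ.length)

lemma mem_desSet {w : List ℕ} {i : ℕ} :
    i ∈ desSet w ↔ 0 < i ∧ i < w.length ∧ w.getD i 0 < w.getD (i-1) 0 := by
  simp [desSet]; tauto

lemma interleave_length (σ τ : List ℕ) (P : Finset ℕ) :
    (interleave σ τ P).length = σ.length + τ.length := by simp [interleave]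

lemma interleave_getD (σ τ : List ℕ) (P : Finset ℕ) {i : ℕ} (hi : i < σ.length + τ.length) :
    (interleave σ τ P).getD i 0 =
      if i ∈ P then σ.getD ((P.filter (· < i)).card) 0
      else τ.getD (((Finset.range (σ.length + τ.length) \ P).filter (· < i)).card) 0
        + σ.length := by
  unfold interleave
  rw [List.getD_eq_getElem?_getD]
  simp [List.getElem?_map, List.getElem?_range, hi]

lemma filter_card_succ {S : Finset ℕ} {j : ℕ} (hj : j ∈ S) :
    (S.filter (· < j + 1)).card = (S.filter (· < j)).card + 1 := by
  have h : S.filter (· < j + 1) = insert j (S.filter (· < j)) := by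
    ext x
    simp only [Finset.mem_filter, Finset.mem_insert]
    constructor
    · rintro ⟨hxS, hx⟩
      rcases Nat.lt_or_ge x j with h' | h'
      · exact Or.inr ⟨hxS, h'⟩
      · exact Or.inl (by omega)
    · rintro (rfl | ⟨hxS, hx⟩)
      · exact ⟨hj, by omega⟩
      · exact ⟨hxS, by omega⟩
  rw [h, Finset.card_insert_of_notMem (by simp)]

lemma filter_card_lt {S : Finset ℕ} {j : ℕ} (hj : j ∈ S) :
    (S.filter (· < j)).card < S.card :=
  Finset.card_lt_card (Finset.filter_ssubset.mpr ⟨j, hj, by simp⟩)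

lemma getD_le {w : List ℕ} {k : ℕ} (h : ∀ x ∈ w, x ≤ k) (j : ℕ) : w.getD j 0 ≤ k := by
  by_cases hj : j < w.length
  · rw [List.getD_eq_getElem _ _ hj]; exact h _ (List.getElem_mem hj)
  · rw [List.getD_eq_default _ _ (le_of_not_gt hj)]; exact Nat.zero_le k

lemma getD_pos {w : List ℕ} (h : ∀ x ∈ w, 1 ≤ x) {j : ℕ} (hj : j < w.length) :
    1 ≤ w.getD j 0 := by
  rw [List.getD_eq_getElem _ _ hj]; exact h _ (List.getElem_mem hj)

/-- If `σ, σ'` are permutations of `{1,…,k}` with the same descent set and `τ, τ'` are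
permutations of `{1,…,ℓ}` with the same descent set, then for every `k`-element set `P`
of positions, the shuffled words `w(σ,τ,P)` and `w(σ',τ',P)` have the same descent set. -/
theorem interleave_desSet_depends_only_on_descents
    (k l : ℕ) (hk : 1 ≤ k) (hl : 1 ≤ l) (σ σ' τ τ' : List ℕ)
    (hσ : σ.Perm ((List.range k).map (· + 1)))
    (hσ' : σ'.Perm ((List.range k).map (· + 1)))
    (hτ : τ.Perm ((List.range l).map (· + 1)))
    (hτ' : τ'.Perm ((List.range l).map (· + 1)))
    (hdσ : desSet σ = desSet σ') (hdτ : desSet τ = desSet τ')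
    (P : Finset ℕ) (hP : P ⊆ Finset.range (k + l)) (hPcard : P.card = k) :
    desSet (interleave σ τ P) = desSet (interleave σ' τ' P) := by
  have hσlen : σ.length = k := by simpa using hσ.length_eq
  have hσ'len : σ'.length = k := by simpa using hσ'.length_eq
  have hτlen : τ.length = l := by simpa using hτ.length_eq
  have hτ'len : τ'.length = l := by simpa using hτ'.length_eq
  have hσmem : ∀ x ∈ σ, 1 ≤ x ∧ x ≤ k := by
    intro x hx; have := hσ.mem_iff.mp hx; simp at this; omega
  have hσ'mem : ∀ x ∈ σ', 1 ≤ x ∧ x ≤ k := by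
    intro x hx; have := hσ'.mem_iff.mp hx; simp at this; omega
  have hτmem : ∀ x ∈ τ, 1 ≤ x ∧ x ≤ l := by
    intro x hx; have := hτ.mem_iff.mp hx; simp at this; omega
  have hτ'mem : ∀ x ∈ τ', 1 ≤ x ∧ x ≤ l := by
    intro x hx; have := hτ'.mem_iff.mp hx; simp at this; omega
  have hQcard : (Finset.range (k + l) \ P).card = l := by
    rw [Finset.card_sdiff_of_subset hP, Finset.card_range, hPcard]; omega
  ext i
  rw [mem_desSet, mem_desSet, interleave_length, interleave_length,
    hσlen, hτlen, hσ'len, hτ'len]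
  by_cases hi0 : 0 < i; swap
  · simp [hi0]
  by_cases hin : i < k + l; swap
  · simp [hin]
  simp only [hi0, hin, true_and]
  obtain ⟨m, rfl⟩ : ∃ m, i = m + 1 := ⟨i - 1, by omega⟩
  simp only [Nat.add_sub_cancel]
  have hm : m < k + l := by omega
  have e1 := interleave_getD σ τ P (i := m + 1) (by rw [hσlen, hτlen]; omega)
  have e2 := interleave_getD σ τ P (i := m) (by rw [hσlen, hτlen]; omega)
  have e1' := interleave_getD σ' τ' P (i := m + 1) (by rw [hσ'len, hτ'len]; omega)
  have e2' := interleave_getD σ' τ' P (i := m) (by rw [hσ'len, hτ'len]; omega)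
  rw [hσlen, hτlen] at e1 e2
  rw [hσ'len, hτ'len] at e1' e2'
  rw [e1, e2, e1', e2']
  by_cases h1 : m + 1 ∈ P <;> by_cases h2 : m ∈ P <;>
    simp only [h1, h2, if_true, if_false, if_pos, if_neg, not_false_iff]
  · -- both in P : descent of σ
    have hc : (P.filter (· < m + 1)).card = (P.filter (· < m)).card + 1 :=
      filter_card_succ h2
    have hck : (P.filter (· < m + 1)).card < k := hPcard ▸ filter_card_lt h1
    have h3 : ∀ ρ : List ℕ, ρ.length = k →
        ((ρ.getD ((P.filter (· < m + 1)).card) 0 < ρ.getD ((P.filter (· < m)).card) 0) ↔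
          (P.filter (· < m + 1)).card ∈ desSet ρ) := by
      intro ρ hρ
      rw [mem_desSet, hρ]
      constructor
      · intro h
        refine ⟨by omega, hck, ?_⟩
        have hcc : (P.filter (· < m + 1)).card - 1 = (P.filter (· < m)).card := by omega
        rw [hcc]; exact h
      · rintro ⟨-, -, h⟩
        have hcc : (P.filter (· < m + 1)).card - 1 = (P.filter (· < m)).card := by omega
        rwa [hcc] at h
    rw [h3 σ hσlen, h3 σ' hσ'len, hdσ]
  · -- m+1 ∈ P, m ∉ P : always a descent
    have hq2 : m ∈ Finset.range (k + l) \ P :=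
      Finset.mem_sdiff.mpr ⟨Finset.mem_range.mpr hm, h2⟩
    have hdl : ((Finset.range (k + l) \ P).filter (· < m)).card < l := by
      have h := filter_card_lt hq2; rwa [hQcard] at h
    have p1 : 1 ≤ τ.getD (((Finset.range (k + l) \ P).filter (· < m)).card) 0 :=
      getD_pos (fun x hx => (hτmem x hx).1) (by rw [hτlen]; exact hdl)
    have p1' : 1 ≤ τ'.getD (((Finset.range (k + l) \ P).filter (· < m)).card) 0 :=
      getD_pos (fun x hx => (hτ'mem x hx).1) (by rw [hτ'len]; exact hdl)
    have b1 := getD_le (fun x hx => (hσmem x hx).2) ((P.filter (· < m + 1)).card)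
    have b1' := getD_le (fun x hx => (hσ'mem x hx).2) ((P.filter (· < m + 1)).card)
    exact iff_of_true (by omega) (by omega)
  · -- m+1 ∉ P, m ∈ P : never a descent
    have b1 := getD_le (fun x hx => (hσmem x hx).2) ((P.filter (· < m)).card)
    have b1' := getD_le (fun x hx => (hσ'mem x hx).2) ((P.filter (· < m)).card)
    exact iff_of_false (by omega) (by omega)
  · -- both not in P : descent of τ
    have hq1 : m + 1 ∈ Finset.range (k + l) \ P :=
      Finset.mem_sdiff.mpr ⟨Finset.mem_range.mpr hin, h1⟩
    have hq2 : m ∈ Finset.range (k + l) \ P :=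
      Finset.mem_sdiff.mpr ⟨Finset.mem_range.mpr hm, h2⟩
    have hc : ((Finset.range (k + l) \ P).filter (· < m + 1)).card =
        ((Finset.range (k + l) \ P).filter (· < m)).card + 1 := filter_card_succ hq2
    have hck : ((Finset.range (k + l) \ P).filter (· < m + 1)).card < l := by
      have h := filter_card_lt hq1; rwa [hQcard] at h
    simp only [Nat.add_lt_add_iff_right]
    have h3 : ∀ ρ : List ℕ, ρ.length = l →
        ((ρ.getD (((Finset.range (k + l) \ P).filter (· < m + 1)).card) 0 <
            ρ.getD (((Finset.range (k + l) \ P).filter (· < m)).card) 0) ↔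
          ((Finset.range (k + l) \ P).filter (· < m + 1)).card ∈ desSet ρ) := by
      intro ρ hρ
      rw [mem_desSet, hρ]
      constructor
      · intro h
        refine ⟨by omega, hck, ?_⟩
        have hcc : ((Finset.range (k + l) \ P).filter (· < m + 1)).card - 1 =
            ((Finset.range (k + l) \ P).filter (· < m)).card := by omega
        rw [hcc]; exact h
      · rintro ⟨-, -, h⟩
        have hcc : ((Finset.range (k + l) \ P).filter (· < m + 1)).card - 1 =
            ((Finset.range (k + l) \ P).filter (· < m)).card := by omega
        rwa [hcc] at h
    rw [h3 τ hτlen, h3 τ' hτ'len, hdτ]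
end

section
/- Let u and v be nonempty words over a totally ordered alphabet, of respective lengths k and ℓ, such that no letter occurs in both u and v. Then the multiset of descent compositions of the words occurring in u ≺′ v equals the multiset of descent compositions of the words occurring in σ ≺′ τ, where: if u_1 < v_1 then σ = std(u) and τ = std(v)[k], and if u_1 > v_1 then σ = std(u)[ℓ] and τ = std(v). Here w[m] denotes the word obtained from w by adding m to every letter. -/
/-- The left half-shuffle `u ≺′ v = a(u' ⧢ v)` for `u = a·u'`, as a multiset of words
(`0` if `u` is empty). -/
def hsL {α : Type*} : List α → List α → Multiset (List α)
  | [], _ => 0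
  | a :: u', v => (sh u' v).map (a :: ·)

/-- The composition of `n` whose proper partial sums are the elements of `S`. -/
def compOfSet (n : ℕ) (S : Finset ℕ) : List ℕ :=
  let l := S.sort (· ≤ ·) ++ [n]
  List.zipWith (fun a b => a - b) l (0 :: l)

/-- The descent composition of a word. -/
def descComp (w : List ℕ) : List ℕ := compOfSet w.length (desSet w)

/-- The standardization of a word `w`: position `p` receives rank
`1 + #{q : w_q < w_p, or w_q = w_p and q < p}`. -/
def stdW (w : List ℕ) : List ℕ :=
  (List.range w.length).map (fun p =>
    1 + ((List.range w.length).filter (fun q =>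
      decide (w.getD q 0 < w.getD p 0 ∨ (w.getD q 0 = w.getD p 0 ∧ q < p)))).length)




instance instDecidableChainOld {α : Type*} {R : α → α → Prop} [DecidableRel R] (a : α)
    (l : List α) : Decidable (List.Chain R a l) :=
  inferInstanceAs (Decidable (List.IsChain R (a :: l)))

instance instDecidableChain'Old {α : Type*} {R : α → α → Prop} [DecidableRel R]
    (l : List α) : Decidable (List.Chain' R l) :=
  inferInstanceAs (Decidable (List.IsChain R l))

@[simp] theorem chain_cons' {α : Type*} {R : α → α → Prop} {a b : α} {l : List α} :
    List.Chain R a (b :: l) ↔ R a b ∧ List.Chain R b l := List.isChain_cons_cons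

@[simp] theorem chain_nil' {α : Type*} {R : α → α → Prop} {a : α} :
    List.Chain R a [] := List.IsChain.singleton a

def Rv : ℕ × ℕ → ℕ × ℕ → Prop := fun p q => p.1 < q.1 ∨ (p.1 = q.1 ∧ p.2 ≤ q.2)

instance : DecidableRel Rv := fun p q => by unfold Rv; infer_instance

def cnt (p : ℕ × ℕ) (u v h : List ℕ) : ℕ :=
  (sh u v).countP (fun w => List.Chain Rv p (h.zip w))

def desL : List ℕ → List Bool
  | a :: b :: t => decide (b < a) :: desL (b :: t)
  | _ => []

@[simp] lemma desL_nil : desL [] = [] := rfl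
@[simp] lemma desL_single (a : ℕ) : desL [a] = [] := rfl
@[simp] lemma desL_cons (a b : ℕ) (t : List ℕ) :
    desL (a :: b :: t) = decide (b < a) :: desL (b :: t) := rfl

lemma desL_length : ∀ w : List ℕ, (desL w).length = w.length - 1
  | [] => rfl
  | [_] => rfl
  | a :: b :: t => by simp [desL_length (b :: t)]

lemma length_mem_sh {α : Type*} : ∀ (u v : List α), ∀ w ∈ sh u v,
    w.length = u.length + v.length
  | [], v => by simp [sh]
  | a :: u, [] => by simp [sh]
  | a :: u, b :: v => by
    intro w hw
    rw [sh] at hw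
    simp only [Multiset.mem_add, Multiset.mem_map] at hw
    rcases hw with ⟨w', hw', rfl⟩ | ⟨w', hw', rfl⟩
    · have := length_mem_sh u (b :: v) w' hw'; simp at this ⊢; omega
    · have := length_mem_sh (a :: u) v w' hw'; simp at this ⊢; omega
termination_by u v => u.length + v.length
decreasing_by all_goals (simp [List.length_cons]; try omega)

lemma card_sh {α : Type*} : ∀ (u v : List α),
    Multiset.card (sh u v) = (u.length + v.length).choose u.length
  | [], v => by simp [sh]
  | a :: u, [] => by simp [sh]
  | a :: u, b :: v => by
    rw [sh]
    simp only [Multiset.card_add, Multiset.card_map, card_sh u (b :: v), card_sh (a :: u) v]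
    simp only [List.length_cons]
    rw [show u.length + 1 + (v.length + 1) = (u.length + (v.length+1)) + 1 by omega,
      Nat.choose_succ_succ, show u.length + 1 + v.length = u.length + (v.length+1) by omega]
termination_by u v => u.length + v.length
decreasing_by all_goals (simp [List.length_cons]; try omega)

lemma countP_map' {α β : Type*} (f : α → β) (s : Multiset α) (p : β → Prop) [DecidablePred p] :
    (s.map f).countP p = s.countP (fun a => p (f a)) := by
  rw [Multiset.countP_map, Multiset.countP_eq_card_filter]

lemma cnt_h_nil (p : ℕ × ℕ) (u v : List ℕ) :
    cnt p u v [] = Multiset.card (sh u v) := by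
  simp [cnt, List.zip_nil_left]

lemma cnt_nil_nil (p : ℕ × ℕ) (h : List ℕ) : cnt p [] [] h = 1 := by
  rw [cnt, sh, show ({[]} : Multiset (List ℕ)) = [] ::ₘ 0 from rfl, Multiset.countP_cons]
  simp [List.zip_nil_right]

lemma countP_cons_aux (p : ℕ × ℕ) (c : ℕ) (x : ℕ) (h : List ℕ) (s : Multiset (List ℕ)) :
    (s.map (x :: ·)).countP (fun w => List.Chain Rv p ((c :: h).zip w)) =
      if Rv p (c, x) then s.countP (fun w => List.Chain Rv (c, x) (h.zip w)) else 0 := by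
  rw [countP_map']
  by_cases hR : Rv p (c, x)
  · rw [if_pos hR]
    apply Multiset.countP_congr rfl
    intro w _
    simp [chain_cons', hR]
  · rw [if_neg hR]
    rw [Multiset.countP_eq_zero]
    intro w _
    simp [chain_cons', hR]

lemma cnt_cons_cons (p : ℕ × ℕ) (a b c : ℕ) (u' v' h' : List ℕ) :
    cnt p (a :: u') (b :: v') (c :: h') =
      (if Rv p (c, a) then cnt (c, a) u' (b :: v') h' else 0) +
      (if Rv p (c, b) then cnt (c, b) (a :: u') v' h' else 0) := by
  rw [cnt, sh, Multiset.countP_add, countP_cons_aux, countP_cons_aux]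
  rfl

lemma cnt_cons_nil (p : ℕ × ℕ) (a c : ℕ) (u' h' : List ℕ) :
    cnt p (a :: u') [] (c :: h') =
      if Rv p (c, a) then cnt (c, a) u' [] h' else 0 := by
  have : sh (a :: u') ([] : List ℕ) = (sh u' []).map (a :: ·) := by
    cases u' <;> simp [sh]
  rw [cnt, this, countP_cons_aux]
  rfl

lemma cnt_nil_cons (p : ℕ × ℕ) (b c : ℕ) (v' h' : List ℕ) :
    cnt p [] (b :: v') (c :: h') =
      if Rv p (c, b) then cnt (c, b) [] v' h' else 0 := by
  have : sh ([] : List ℕ) (b :: v') = (sh [] v').map (b :: ·) := by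
    simp [sh]
  rw [cnt, this, countP_cons_aux]
  rfl

lemma cnt_state (p p' : ℕ × ℕ) (u v h : List ℕ)
    (hpp : ∀ d y, h.head? = some d → (Rv p (d, y) ↔ Rv p' (d, y))) :
    cnt p u v h = cnt p' u v h := by
  apply Multiset.countP_congr rfl
  intro w _
  cases h with
  | nil => simp
  | cons d h' =>
    cases w with
    | nil => simp
    | cons y w' =>
      simp only [List.zip_cons_cons, chain_cons', eq_iff_iff]
      constructor <;> (rintro ⟨h1, h2⟩; exact ⟨by rw [hpp d y rfl] at *; assumption, h2⟩)

lemma cnt_zero (p : ℕ × ℕ) (d : ℕ) (u v h' : List ℕ)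
    (hd : ∀ y, ¬ Rv p (d, y)) (hne : u.length + v.length ≠ 0) :
    cnt p u v (d :: h') = 0 := by
  rw [cnt, Multiset.countP_eq_zero]
  intro w hw
  have hl := length_mem_sh u v w hw
  cases w with
  | nil => simp at hl; omega
  | cons y w' =>
    simp only [List.zip_cons_cons, chain_cons']
    rintro ⟨h1, _⟩
    exact hd y h1

lemma Rv_same {c x y : ℕ} : Rv (c,x) (c,y) ↔ x ≤ y := by unfold Rv; simp

lemma Rv_ne {c x d y : ℕ} (h : d ≠ c) : Rv (c,x) (d,y) ↔ c < d := by
  unfold Rv; simp only []; omega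

lemma chain_le_trans {x a : ℕ} {l : List ℕ} (h : x ≤ a)
    (hc : List.Chain (· ≤ ·) a l) : List.Chain (· ≤ ·) x l := by
  cases l with
  | nil => exact List.Chain.nil
  | cons e l' =>
    rw [chain_cons'] at hc ⊢
    exact ⟨le_trans h hc.1, hc.2⟩

lemma run_lemma : ∀ (j : ℕ) (x : ℕ) (u v : List ℕ) {c : ℕ} {h₂ : List ℕ},
    (∀ a ∈ u, ∀ b ∈ v, a ≠ b) →
    u.length + v.length = j + h₂.length →
    (∀ d, h₂.head? = some d → d ≠ c) →
    cnt (c, x) u v (List.replicate j c ++ h₂) =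
      ∑ t ∈ Finset.range (j + 1),
        if t ≤ u.length ∧ j - t ≤ v.length ∧
            List.Chain (· ≤ ·) x (u.take t) ∧ List.Chain (· ≤ ·) x (v.take (j - t))
        then cnt (c, 0) (u.drop t) (v.drop (j - t)) h₂ else 0 := by
  intro j
  induction j with
  | zero =>
    intro x u v c h₂ hdisj hlen hfresh
    rw [Finset.sum_range_one]
    simp only [List.replicate_zero, List.nil_append, Nat.zero_sub, List.take_zero,
      List.drop_zero, List.Chain.nil, Nat.zero_le, and_true, true_and, if_pos,
      le_refl]
    apply cnt_state
    intro d y hd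
    have : d ≠ c := hfresh d hd
    simp only [Rv_ne this]
  | succ j IH =>
    intro x u v c h₂ hdisj hlen hfresh
    rw [List.replicate_succ, List.cons_append]
    match u, v with
    | [], [] => simp at hlen; omega
    | a :: u', [] =>
      rw [cnt_cons_nil]
      simp only [Rv_same]
      have hIH := IH a u' [] (by intro p hp q hq; simp at hq)
        (by simp at hlen ⊢; omega) hfresh
      rw [hIH]
      rw [Finset.sum_eq_single j]
      rotate_left
      · intro t ht hne
        rw [if_neg]
        rintro ⟨h1, h2, -⟩
        simp only [List.length_nil, Nat.le_zero] at h2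
        exact hne (by simp at ht; omega)
      · intro h; exact absurd (Finset.self_mem_range_succ j) h
      rw [Finset.sum_eq_single (j+1)]
      rotate_left
      · intro t ht hne
        rw [if_neg]
        rintro ⟨h1, h2, -⟩
        simp only [List.length_nil, Nat.le_zero] at h2
        exact hne (by simp at ht; omega)
      · intro h; exact absurd (Finset.self_mem_range_succ (j+1)) h
      simp only [List.take_succ_cons, List.drop_succ_cons, chain_cons',
        List.length_cons, List.take_nil, List.drop_nil, List.Chain.nil,
        Nat.sub_self, and_true, true_and, le_refl, List.length_nil, Nat.le_zero]
      by_cases h1 : List.Chain (· ≤ ·) a (u'.take j) <;> by_cases h2 : x ≤ a <;>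
        simp only [h1, h2, and_true, true_and, and_false, false_and, if_false, if_true,
          iff_true, iff_false, not_true, not_false_iff] <;>
        split_ifs <;> omega
    | [], b :: v' =>
      rw [cnt_nil_cons]
      simp only [Rv_same]
      have hIH := IH b [] v' (by intro p hp; simp at hp)
        (by simp at hlen ⊢; omega) hfresh
      rw [hIH]
      rw [Finset.sum_eq_single 0]
      rotate_left
      · intro t ht hne
        rw [if_neg]
        rintro ⟨h1, -⟩
        simp only [List.length_nil, Nat.le_zero] at h1
        exact hne h1
      · intro h; exact absurd (by simp : 0 ∈ Finset.range (j+1)) h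
      rw [Finset.sum_eq_single 0]
      rotate_left
      · intro t ht hne
        rw [if_neg]
        rintro ⟨h1, -⟩
        simp only [List.length_nil, Nat.le_zero] at h1
        exact hne h1
      · intro h; exact absurd (by simp : 0 ∈ Finset.range (j+1+1)) h
      simp only [Nat.sub_zero, List.take_zero, List.drop_zero, List.take_succ_cons,
        List.drop_succ_cons, chain_cons', List.length_cons, List.take_nil,
        List.drop_nil, List.Chain.nil, and_true, true_and, le_refl, List.length_nil,
        Nat.le_zero, Nat.zero_le]
      by_cases h1 : List.Chain (· ≤ ·) b (v'.take j) <;> by_cases h2 : x ≤ b <;>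
        simp only [h1, h2, and_true, true_and, and_false, false_and, if_false, if_true,
          iff_true, iff_false, not_true, not_false_iff] <;>
        split_ifs <;> omega
    | a :: u', b :: v' =>
      rw [cnt_cons_cons]
      simp only [Rv_same]
      have hIHa := IH a u' (b :: v')
        (by intro p hp q hq; exact hdisj p (List.mem_cons_of_mem a hp) q hq)
        (by simp at hlen ⊢; omega) hfresh
      rw [hIHa]
      have hIHb := IH b (a :: u') v'
        (by intro p hp q hq; exact hdisj p hp q (List.mem_cons_of_mem b hq))
        (by simp at hlen ⊢; omega) hfresh
      rw [hIHb]
      have hab : a ≠ b := hdisj a List.mem_cons_self b List.mem_cons_self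
      have key : ∀ t ∈ Finset.range (j + 1 + 1),
          (if t ≤ (a :: u').length ∧ j + 1 - t ≤ (b :: v').length ∧
              List.Chain (· ≤ ·) x ((a :: u').take t) ∧
              List.Chain (· ≤ ·) x ((b :: v').take (j + 1 - t)) then
            cnt (c, 0) ((a :: u').drop t) ((b :: v').drop (j + 1 - t)) h₂ else 0)
          = (if 1 ≤ t ∧ x ≤ a ∧ ((t - 1) ≤ u'.length ∧ j - (t - 1) ≤ (b :: v').length ∧
              List.Chain (· ≤ ·) a (u'.take (t - 1)) ∧
              List.Chain (· ≤ ·) a ((b :: v').take (j - (t - 1)))) then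
            cnt (c, 0) (u'.drop (t - 1)) ((b :: v').drop (j - (t - 1))) h₂ else 0)
          + (if t ≤ j ∧ x ≤ b ∧ (t ≤ (a :: u').length ∧ j - t ≤ v'.length ∧
              List.Chain (· ≤ ·) b ((a :: u').take t) ∧
              List.Chain (· ≤ ·) b (v'.take (j - t))) then
            cnt (c, 0) ((a :: u').drop t) (v'.drop (j - t)) h₂ else 0) := by
        intro t ht
        rw [Finset.mem_range] at ht
        rcases Nat.eq_zero_or_pos t with rfl | htpos
        · -- t = 0 : only the B term contributes
          simp only [show ¬(1 ≤ (0:ℕ)) from by omega, false_and, if_false, zero_add]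
          have e1 : j + 1 - 0 = (j - 0) + 1 := by omega
          simp only [e1, Nat.sub_zero, List.take_zero, List.drop_zero,
            List.take_succ_cons, List.drop_succ_cons, chain_cons',
            List.Chain.nil, List.length_cons, and_true, true_and]
          by_cases h1 : List.Chain (· ≤ ·) b (v'.take j) <;> by_cases h2 : x ≤ b <;>
            simp only [h1, h2, and_true, true_and, and_false, false_and, if_false,
              if_true] <;>
            split_ifs <;> omega
        · rcases Nat.lt_or_ge t (j + 1) with htlt | htge
          · -- middle case : 1 ≤ t ≤ j
            obtain ⟨t', rfl⟩ : ∃ t', t = t' + 1 := ⟨t - 1, by omega⟩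
            have e1 : j + 1 - (t' + 1) = (j - (t' + 1)) + 1 := by omega
            have e2 : t' + 1 - 1 = t' := by omega
            have e3 : j - t' = (j - (t' + 1)) + 1 := by omega
            simp only [e1, e2, e3, List.take_succ_cons, List.drop_succ_cons,
              chain_cons', List.length_cons]
            by_cases h1 : List.Chain (· ≤ ·) a (u'.take t') <;>
              by_cases h2 : List.Chain (· ≤ ·) b (v'.take (j - (t' + 1))) <;>
              simp only [h1, h2, and_true, true_and, and_false, false_and, if_false,
                if_true] <;>
              split_ifs <;> omega
          · -- t = j + 1 : only the A term contributes
            have : t = j + 1 := by omega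
            subst this
            have e1 : j + 1 - (j + 1) = 0 := by omega
            have e2 : j + 1 - 1 = j := by omega
            have e3 : j - j = 0 := by omega
            simp only [e1, e2, e3, List.take_zero, List.drop_zero,
              List.take_succ_cons, List.drop_succ_cons, chain_cons',
              List.Chain.nil, List.length_cons, and_true, true_and]
            by_cases h1 : List.Chain (· ≤ ·) a (u'.take j) <;> by_cases h2 : x ≤ a <;>
              simp only [h1, h2, and_true, true_and, and_false, false_and, if_false,
                if_true] <;>
              split_ifs <;> omega
      rw [Finset.sum_congr rfl key, Finset.sum_add_distrib]
      congr 1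
      · -- the A-sum equals the first summand
        conv_rhs => rw [Finset.sum_range_succ']
        simp only [show ¬(1 ≤ (0:ℕ)) from by omega, false_and, if_false, add_zero]
        by_cases hxa : x ≤ a
        · rw [if_pos hxa]
          apply Finset.sum_congr rfl
          intro t' _
          simp only [Nat.add_sub_cancel, hxa, true_and,
            (show 1 ≤ t' + 1 by omega), if_pos]
        · rw [if_neg hxa]
          rw [Finset.sum_eq_zero]
          intro t' _
          rw [if_neg]
          rintro ⟨-, hxa', -⟩
          exact hxa hxa'
      · -- the B-sum equals the second summand
        conv_rhs => rw [Finset.sum_range_succ]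
        simp only [show ¬(j + 1 ≤ j) from by omega, false_and, if_false, add_zero]
        by_cases hxb : x ≤ b
        · rw [if_pos hxb]
          apply Finset.sum_congr rfl
          intro t ht
          rw [Finset.mem_range] at ht
          simp only [hxb, true_and, (show t ≤ j by omega), if_pos]
        · rw [if_neg hxb]
          rw [Finset.sum_eq_zero]
          intro t ht
          rw [if_neg]
          rintro ⟨-, hxb', -⟩
          exact hxb hxb'

lemma chain_head_iff : ∀ (l : List ℕ) (x : ℕ),
    List.Chain (· ≤ ·) x l ↔ (∀ b ∈ desL (x :: l), b = false)
  | [], x => by simp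
  | y :: l', x => by
    rw [chain_cons', chain_head_iff l' y, desL_cons]
    simp only [List.mem_cons, forall_eq_or_imp]
    constructor
    · rintro ⟨h1, h2⟩
      exact ⟨by simpa using h1, h2⟩
    · rintro ⟨h1, h2⟩
      exact ⟨by simpa using h1, h2⟩

lemma chain_zero_iff (l : List ℕ) :
    List.Chain (· ≤ ·) 0 l ↔ (∀ b ∈ desL l, b = false) := by
  rw [chain_head_iff]
  cases l with
  | nil => simp
  | cons y l' => rw [desL_cons]; simp

lemma desL_take : ∀ (t : ℕ) (l : List ℕ), desL (l.take t) = (desL l).take (t - 1)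
  | 0, l => by simp
  | t+1, [] => by simp
  | t+1, [a] => by simp
  | t+1, a :: b :: r => by
    cases t with
    | zero => simp
    | succ t' =>
      rw [List.take_succ_cons, List.take_succ_cons, desL_cons, desL_cons]
      have := desL_take (t' + 1) (b :: r)
      rw [List.take_succ_cons] at this
      rw [this]
      simp

lemma desL_drop : ∀ (t : ℕ) (l : List ℕ), desL (l.drop t) = (desL l).drop t
  | 0, l => by simp
  | t+1, [] => by simp
  | t+1, [a] => by simp
  | t+1, a :: b :: r => by
    rw [List.drop_succ_cons, desL_cons, desL_drop t (b :: r)]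
    simp

lemma run_decomp (c : ℕ) : ∀ (l : List ℕ), ∃ j h₂, l = List.replicate j c ++ h₂ ∧
    ∀ e, h₂.head? = some e → e ≠ c
  | [] => ⟨0, [], by simp, by simp⟩
  | e :: l' => by
    by_cases he : e = c
    · obtain ⟨j, h₂, hform, hfresh⟩ := run_decomp c l'
      exact ⟨j + 1, h₂, by rw [List.replicate_succ, List.cons_append, ← hform, he], hfresh⟩
    · exact ⟨0, e :: l', by simp, by simpa using he⟩

lemma main_lemma : ∀ (n : ℕ) (h : List ℕ), h.length ≤ n → ∀ (c : ℕ) (u v u₂ v₂ : List ℕ),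
    (∀ a ∈ u, ∀ b ∈ v, a ≠ b) → (∀ a ∈ u₂, ∀ b ∈ v₂, a ≠ b) →
    u.length = u₂.length → v.length = v₂.length →
    desL u = desL u₂ → desL v = desL v₂ →
    h.length = u.length + v.length →
    (∀ d, h.head? = some d → d ≠ c) →
    cnt (c, 0) u v h = cnt (c, 0) u₂ v₂ h := by
  intro n
  induction n with
  | zero =>
    intro h hle c u v u₂ v₂ _ _ hul hvl _ _ hlen _
    have : h = [] := List.length_eq_zero_iff.mp (by omega)
    subst this
    rw [cnt_h_nil, cnt_h_nil, card_sh, card_sh, hul, hvl]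
  | succ n IHn =>
    intro h hle c u v u₂ v₂ hdj hdj₂ hul hvl hdu hdv hlen hhead
    cases h with
    | nil => rw [cnt_h_nil, cnt_h_nil, card_sh, card_sh, hul, hvl]
    | cons d h' =>
      have hdc : d ≠ c := hhead d rfl
      have hlen' : h'.length + 1 = u.length + v.length := by simpa using hlen
      rcases lt_trichotomy c d with hcd | hcd | hcd
      · -- c < d : change state and use the run decomposition
        obtain ⟨j, h₂, hform, hfresh⟩ := run_decomp d h'
        have hst : ∀ (w₁ w₂ : List ℕ), cnt (c, 0) w₁ w₂ (d :: h') = cnt (d, 0) w₁ w₂ (d :: h') := by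
          intro w₁ w₂
          apply cnt_state
          intro e y he
          simp only [List.head?_cons, Option.some.injEq] at he
          subst he
          rw [Rv_ne hdc, Rv_same]
          omega
        rw [hst u v, hst u₂ v₂]
        subst hform
        have hrep : (d :: (List.replicate j d ++ h₂)) = List.replicate (j+1) d ++ h₂ := by
          rw [List.replicate_succ, List.cons_append]
        rw [hrep]
        have hlj : h₂.length + j + 1 = u.length + v.length := by
          simp at hlen'; omega
        rw [run_lemma (j+1) 0 u v hdj (by omega) hfresh,
          run_lemma (j+1) 0 u₂ v₂ hdj₂ (by omega) hfresh]
        apply Finset.sum_congr rfl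
        intro t ht
        rw [Finset.mem_range] at ht
        simp only [chain_zero_iff, desL_take, hdu, hdv, hul, hvl]
        split_ifs with hc
        · apply IHn h₂ (by simp at hle; omega) d
          · intro p hp q hq
            exact hdj p ((List.drop_sublist t u).subset hp) q
              ((List.drop_sublist (j+1-t) v).subset hq)
          · intro p hp q hq
            exact hdj₂ p ((List.drop_sublist t u₂).subset hp) q
              ((List.drop_sublist (j+1-t) v₂).subset hq)
          · simp only [List.length_drop]; omega
          · simp only [List.length_drop]; omega
          · rw [desL_drop, desL_drop, hdu]
          · rw [desL_drop, desL_drop, hdv]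
          · simp only [List.length_drop]; omega
          · exact hfresh
        · rfl
      · exact absurd hcd.symm hdc
      · -- d < c : both sides are 0
        have h1 : ∀ y, ¬ Rv ((c : ℕ), 0) (d, y) := by
          intro y; unfold Rv; simp only; omega
        rw [cnt_zero _ _ _ _ _ h1 (by omega), cnt_zero _ _ _ _ _ h1 (by omega)]

lemma half_lemma (a b a₂ b₂ : ℕ) (u' v' u₂' v₂' : List ℕ) (h : List ℕ)
    (hdj : ∀ p ∈ a :: u', ∀ q ∈ b :: v', p ≠ q)
    (hdj₂ : ∀ p ∈ a₂ :: u₂', ∀ q ∈ b₂ :: v₂', p ≠ q)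
    (hul : u'.length = u₂'.length) (hvl : v'.length = v₂'.length)
    (hdu : desL (a :: u') = desL (a₂ :: u₂')) (hdv : desL (b :: v') = desL (b₂ :: v₂'))
    (hbit : a ≤ b ↔ a₂ ≤ b₂)
    (hlen : h.length = u'.length + v'.length + 2) :
    (hsL (a :: u') (b :: v')).countP (fun w => List.Chain' Rv (h.zip w)) =
    (hsL (a₂ :: u₂') (b₂ :: v₂')).countP (fun w => List.Chain' Rv (h.zip w)) := by
  cases h with
  | nil => simp at hlen
  | cons c h' =>
    have e1 : ∀ (x : ℕ) (u v : List ℕ),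
        (hsL (x :: u) v).countP (fun w => List.Chain' Rv ((c :: h').zip w)) =
          cnt (c, x) u v h' := by
      intro x u v
      rw [hsL, countP_map', cnt]
      apply Multiset.countP_congr rfl
      intro w _
      simp only [List.zip_cons_cons]
      rfl
    rw [e1, e1]
    obtain ⟨j, h₂, hform, hfresh⟩ := run_decomp c h'
    subst hform
    have hlen' : j + h₂.length = u'.length + v'.length + 1 := by
      simp at hlen; omega
    rw [run_lemma j a u' (b :: v')
        (by intro p hp q hq; exact hdj p (List.mem_cons_of_mem a hp) q hq)
        (by simp; omega) hfresh,
      run_lemma j a₂ u₂' (b₂ :: v₂')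
        (by intro p hp q hq; exact hdj₂ p (List.mem_cons_of_mem a₂ hp) q hq)
        (by simp; omega) hfresh]
    apply Finset.sum_congr rfl
    intro t ht
    rw [Finset.mem_range] at ht
    have hc1 : List.Chain (· ≤ ·) a (u'.take t) ↔ List.Chain (· ≤ ·) a₂ (u₂'.take t) := by
      rw [chain_head_iff, chain_head_iff,
        show (a :: u'.take t) = (a :: u').take (t + 1) from (List.take_succ_cons ..).symm,
        show (a₂ :: u₂'.take t) = (a₂ :: u₂').take (t + 1) from (List.take_succ_cons ..).symm,
        desL_take, desL_take, hdu]
    have hcv : List.Chain (· ≤ ·) b (v'.take (j - t - 1)) ↔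
        List.Chain (· ≤ ·) b₂ (v₂'.take (j - t - 1)) := by
      rw [chain_head_iff, chain_head_iff,
        show (b :: v'.take (j - t - 1)) = (b :: v').take (j - t - 1 + 1) from
          (List.take_succ_cons ..).symm,
        show (b₂ :: v₂'.take (j - t - 1)) = (b₂ :: v₂').take (j - t - 1 + 1) from
          (List.take_succ_cons ..).symm,
        desL_take, desL_take, hdv]
    have hc2 : List.Chain (· ≤ ·) a ((b :: v').take (j - t)) ↔
        List.Chain (· ≤ ·) a₂ ((b₂ :: v₂').take (j - t)) := by
      cases hs : j - t with
      | zero => simp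
      | succ s' =>
        rw [List.take_succ_cons, List.take_succ_cons, chain_cons', chain_cons']
        have : j - t - 1 = s' := by omega
        rw [this] at hcv
        exact and_congr hbit hcv
    have hC : (t ≤ u'.length ∧ j - t ≤ (b :: v').length ∧
        List.Chain (· ≤ ·) a (u'.take t) ∧ List.Chain (· ≤ ·) a ((b :: v').take (j - t)))
        ↔ (t ≤ u₂'.length ∧ j - t ≤ (b₂ :: v₂').length ∧
        List.Chain (· ≤ ·) a₂ (u₂'.take t) ∧
        List.Chain (· ≤ ·) a₂ ((b₂ :: v₂').take (j - t))) := by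
      apply and_congr (by rw [hul])
      apply and_congr (by simp [hvl])
      exact and_congr hc1 hc2
    simp only [hC]
    split_ifs with hc
    · apply main_lemma h₂.length h₂ le_rfl c
      · intro p hp q hq
        exact hdj p (List.mem_cons_of_mem a ((List.drop_sublist t u').subset hp)) q
          ((List.drop_sublist (j - t) (b :: v')).subset hq)
      · intro p hp q hq
        exact hdj₂ p (List.mem_cons_of_mem a₂ ((List.drop_sublist t u₂').subset hp)) q
          ((List.drop_sublist (j - t) (b₂ :: v₂')).subset hq)
      · simp only [List.length_drop]; omega
      · simp only [List.length_drop, List.length_cons]; omega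
      · rw [desL_drop, desL_drop]
        congr 1
        rw [show desL u' = (desL (a :: u')).drop 1 from by
          rw [← desL_drop]; simp, hdu, ← desL_drop]
        simp
      · rw [desL_drop, desL_drop, hdv]
      · simp only [List.length_drop, List.length_cons]
        obtain ⟨hg1, hg2, -⟩ := hc
        simp only [List.length_cons] at hg2
        omega
      · exact hfresh
    · rfl


lemma desL_eq_map : ∀ w : List ℕ,
    desL w = (List.range (w.length - 1)).map (fun i => decide (w.getD (i+1) 0 < w.getD i 0))
  | [] => rfl
  | [a] => rfl
  | a :: b :: t => by
    rw [desL_cons, desL_eq_map (b :: t)]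
    have hlen : (a :: b :: t).length - 1 = ((b :: t).length - 1) + 1 := by simp
    rw [hlen, List.range_succ_eq_map, List.map_cons, List.map_map]
    simp [Function.comp]

lemma desL_congr (w w' : List ℕ) (hl : w.length = w'.length)
    (hiff : ∀ i, i + 1 < w.length →
      (w.getD (i+1) 0 < w.getD i 0 ↔ w'.getD (i+1) 0 < w'.getD i 0)) :
    desL w = desL w' := by
  rw [desL_eq_map, desL_eq_map, hl]
  apply List.map_congr_left
  intro i hi
  rw [List.mem_range] at hi
  rw [decide_eq_decide]
  exact hiff i (by omega)

lemma desL_map_add : ∀ (m : ℕ) (w : List ℕ), desL (w.map (· + m)) = desL w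
  | _, [] => rfl
  | _, [a] => rfl
  | m, a :: b :: t => by
    rw [List.map_cons, List.map_cons, desL_cons, desL_cons]
    have IH := desL_map_add m (b :: t)
    simp only [List.map_cons] at IH
    rw [IH]
    congr 1
    simp only [decide_eq_decide]
    omega

lemma list_countP_mono (p q : ℕ → Bool) : ∀ (l : List ℕ),
    (∀ x ∈ l, p x = true → q x = true) → l.countP p ≤ l.countP q
  | [], _ => le_refl _
  | y :: l', hsub => by
    rw [List.countP_cons, List.countP_cons]
    have := list_countP_mono p q l' (fun x hx => hsub x (List.mem_cons_of_mem y hx))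
    by_cases hy : p y = true
    · rw [hsub y List.mem_cons_self hy, hy]; omega
    · simp only [Bool.not_eq_true] at hy
      rw [hy]
      simp only [Bool.false_eq_true, if_false]
      split_ifs <;> omega

lemma list_countP_lt (p q : ℕ → Bool) (x : ℕ) : ∀ (l : List ℕ),
    (∀ y ∈ l, p y = true → q y = true) → x ∈ l → p x = false → q x = true →
    l.countP p < l.countP q
  | [], _, hx, _, _ => absurd hx List.not_mem_nil
  | y :: l', hsub, hx, hpx, hqx => by
    rw [List.countP_cons, List.countP_cons]
    rcases List.mem_cons.mp hx with rfl | hx'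
    · rw [hpx, hqx]
      have := list_countP_mono p q l' (fun z hz => hsub z (List.mem_cons_of_mem _ hz))
      simp only [Bool.false_eq_true, if_false, if_true]
      omega
    · have := list_countP_lt p q x l' (fun z hz => hsub z (List.mem_cons_of_mem _ hz))
        hx' hpx hqx
      have h2 : (if p y = true then 1 else 0) ≤ (if q y = true then 1 else 0) := by
        by_cases hy : p y = true
        · rw [hsub y List.mem_cons_self hy, hy]
        · simp only [Bool.not_eq_true] at hy; rw [hy]; simp
      omega

lemma stdW_length (w : List ℕ) : (stdW w).length = w.length := by simp [stdW]

lemma stdW_getD (w : List ℕ) (p : ℕ) (hp : p < w.length) :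
    (stdW w).getD p 0 = 1 + ((List.range w.length).countP (fun q =>
      decide (w.getD q 0 < w.getD p 0 ∨ (w.getD q 0 = w.getD p 0 ∧ q < p)))) := by
  rw [stdW, List.getD_eq_getElem _ _ (by simpa using hp)]
  simp [List.countP_eq_length_filter]

lemma stdW_lt (w : List ℕ) {p q : ℕ} (hp : p < w.length) (hq : q < w.length)
    (hkey : w.getD p 0 < w.getD q 0 ∨ (w.getD p 0 = w.getD q 0 ∧ p < q)) :
    (stdW w).getD p 0 < (stdW w).getD q 0 := by
  rw [stdW_getD _ _ hp, stdW_getD _ _ hq]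
  have := list_countP_lt
    (fun r => decide (w.getD r 0 < w.getD p 0 ∨ (w.getD r 0 = w.getD p 0 ∧ r < p)))
    (fun r => decide (w.getD r 0 < w.getD q 0 ∨ (w.getD r 0 = w.getD q 0 ∧ r < q)))
    p (List.range w.length)
    (by intro y _ hy; simp only [decide_eq_true_eq] at hy ⊢; omega)
    (List.mem_range.mpr hp)
    (by simp only [decide_eq_false_iff_not]; omega)
    (by simp only [decide_eq_true_eq]; omega)
  omega

lemma stdW_lt_iff (w : List ℕ) {p q : ℕ} (hp : p < w.length) (hq : q < w.length)
    (hpq : p ≠ q) :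
    ((stdW w).getD p 0 < (stdW w).getD q 0 ↔
      (w.getD p 0 < w.getD q 0 ∨ (w.getD p 0 = w.getD q 0 ∧ p < q))) := by
  constructor
  · intro h
    by_contra hk
    have : w.getD q 0 < w.getD p 0 ∨ (w.getD q 0 = w.getD p 0 ∧ q < p) := by omega
    have := stdW_lt w hq hp this
    omega
  · exact stdW_lt w hp hq

lemma desL_stdW (w : List ℕ) : desL (stdW w) = desL w := by
  apply desL_congr _ _ (stdW_length w)
  intro i hi
  rw [stdW_length] at hi
  rw [stdW_lt_iff w hi (by omega) (by omega)]
  omega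

lemma stdW_bounds (w : List ℕ) {x : ℕ} (hx : x ∈ stdW w) : 1 ≤ x ∧ x ≤ w.length := by
  rw [stdW, List.mem_map] at hx
  obtain ⟨p, hp, rfl⟩ := hx
  rw [List.mem_range] at hp
  constructor
  · omega
  · have := list_countP_lt
      (fun q => decide (w.getD q 0 < w.getD p 0 ∨ (w.getD q 0 = w.getD p 0 ∧ q < p)))
      (fun _ => true) p (List.range w.length)
      (by intro y _ _; rfl)
      (List.mem_range.mpr hp)
      (by simp only [decide_eq_false_iff_not]; omega)
      rfl
    rw [List.countP_true] at this
    rw [List.countP_eq_length_filter] at this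
    simp only [List.length_range] at this
    omega

def covB : List Bool → List Bool → Bool
  | [], [] => true
  | s :: d, t :: e => (!s || t) && covB d e
  | _, _ => false

lemma covB_refl : ∀ d : List Bool, covB d d = true
  | [] => rfl
  | s :: d => by rw [covB]; cases s <;> simp [covB_refl d]

lemma covB_length : ∀ d e : List Bool, covB d e = true → d.length = e.length
  | [], [], _ => rfl
  | [], _ :: _, h => by simp [covB] at h
  | _ :: _, [], h => by simp [covB] at h
  | s :: d, t :: e, h => by
    rw [covB, Bool.and_eq_true] at h
    simp [covB_length d e h.2]

lemma covB_count_le : ∀ d e : List Bool, covB d e = true →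
    d.count true ≤ e.count true
  | [], [], _ => le_refl _
  | [], _ :: _, h => by simp [covB] at h
  | _ :: _, [], h => by simp [covB] at h
  | s :: d, t :: e, h => by
    rw [covB, Bool.and_eq_true] at h
    have := covB_count_le d e h.2
    rw [List.count_cons, List.count_cons]
    have h1 := h.1
    cases s <;> cases t <;> simp_all <;> omega

lemma covB_count_lt : ∀ d e : List Bool, covB d e = true → d ≠ e →
    d.count true < e.count true
  | [], [], _, hne => absurd rfl hne
  | [], _ :: _, h, _ => by simp [covB] at h
  | _ :: _, [], h, _ => by simp [covB] at h
  | s :: d, t :: e, h, hne => by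
    rw [covB, Bool.and_eq_true] at h
    rw [List.count_cons, List.count_cons]
    by_cases hst : s = t
    · subst hst
      have : d ≠ e := by rintro rfl; exact hne rfl
      have := covB_count_lt d e h.2 this
      split_ifs <;> omega
    · have h1 := h.1
      have := covB_count_le d e h.2
      cases s <;> cases t <;> simp_all <;> omega

def hInc : ℕ → List Bool → List ℕ
  | _, [] => []
  | c, b :: ds => (c + b.toNat) :: hInc (c + b.toNat) ds

lemma compat_hInc : ∀ (ds : List Bool) (c x : ℕ) (w : List ℕ), w.length = ds.length →
    (List.Chain Rv (c, x) ((hInc c ds).zip w) ↔ covB (desL (x :: w)) ds = true)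
  | [], c, x, w, hl => by
    have : w = [] := List.length_eq_zero_iff.mp hl
    subst this
    simp [hInc, covB]
  | b :: ds', c, x, [], hl => by simp at hl
  | b :: ds', c, x, y :: w', hl => by
    rw [hInc, List.zip_cons_cons, chain_cons', desL_cons, covB, Bool.and_eq_true]
    have IH := compat_hInc ds' (c + b.toNat) y w' (by simpa using hl)
    rw [IH]
    apply and_congr _ Iff.rfl
    unfold Rv
    cases b <;> simp <;> omega

lemma countP_eq_of_count {α : Type*} [DecidableEq α] (A B : Multiset α) (p : α → Prop)
    [DecidablePred p] (h : ∀ d, p d → A.count d = B.count d) : A.countP p = B.countP p := by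
  rw [Multiset.countP_eq_card_filter, Multiset.countP_eq_card_filter]
  congr 1
  ext d
  rw [Multiset.count_filter, Multiset.count_filter]
  split_ifs with hd
  · exact h d hd
  · rfl

lemma countP_split (d : List Bool) (M : Multiset (List Bool)) :
    M.countP (fun x => covB x d = true) =
      M.count d + M.countP (fun x => covB x d = true ∧ x ≠ d) := by
  induction M using Multiset.induction_on with
  | empty => simp
  | cons a s IH =>
    rw [Multiset.countP_cons, Multiset.countP_cons, Multiset.count_cons]
    by_cases had : a = d
    · subst had
      have e2 : ¬(covB a a = true ∧ a ≠ a) := by rintro ⟨-, h⟩; exact h rfl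
      simp [covB_refl, e2, IH]
      omega
    · have hda : ¬ (d = a) := fun h => had h.symm
      by_cases hc : covB a d = true
      · simp [hda, hc, had, IH]
        omega
      · simp [hda, hc, IH, (show ¬(covB a d = true ∧ a ≠ d) from fun h => hc h.1)]

lemma inversion (m : ℕ) (A B : Multiset (List Bool))
    (hA : ∀ d ∈ A, d.length = m) (hB : ∀ d ∈ B, d.length = m)
    (htest : ∀ e : List Bool, e.length = m →
      A.countP (fun x => covB x e = true) = B.countP (fun x => covB x e = true)) :
    A = B := by
  have key : ∀ (k : ℕ) (d : List Bool), d.count true ≤ k → d.length = m →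
      A.count d = B.count d := by
    intro k
    induction k using Nat.strong_induction_on with
    | _ k IHk =>
      intro d hdk hdm
      have h1 := htest d hdm
      rw [countP_split, countP_split] at h1
      have h2 : A.countP (fun x => covB x d = true ∧ x ≠ d) =
          B.countP (fun x => covB x d = true ∧ x ≠ d) := by
        apply countP_eq_of_count
        rintro x ⟨hc, hne⟩
        by_cases hxm : x.length = m
        · have hlt : x.count true < d.count true := covB_count_lt x d hc hne
          rcases Nat.eq_zero_or_pos k with rfl | hk
          · omega
          · exact IHk (k - 1) (by omega) x (by omega) hxm
        · rw [Multiset.count_eq_zero_of_notMem (fun hx => hxm (hA x hx)),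
            Multiset.count_eq_zero_of_notMem (fun hx => hxm (hB x hx))]
      omega
  apply Multiset.ext.mpr
  intro d
  by_cases hdm : d.length = m
  · exact key (d.count true) d le_rfl hdm
  · rw [Multiset.count_eq_zero_of_notMem (fun hx => hdm (hA d hx)),
      Multiset.count_eq_zero_of_notMem (fun hx => hdm (hB d hx))]




def mkW : List Bool → List ℕ
  | [] => [0]
  | b :: ds => ((mkW ds).headD 0 + b.toNat) :: mkW ds

lemma mkW_ne_nil : ∀ ds : List Bool, mkW ds ≠ []
  | [] => by simp [mkW]
  | b :: ds => by simp [mkW]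

lemma mkW_length : ∀ ds : List Bool, (mkW ds).length = ds.length + 1
  | [] => rfl
  | b :: ds => by rw [mkW, List.length_cons, mkW_length ds]; simp

lemma desL_mkW : ∀ ds : List Bool, desL (mkW ds) = ds
  | [] => rfl
  | b :: ds => by
    obtain ⟨h0, rest, hr⟩ := List.exists_cons_of_ne_nil (mkW_ne_nil ds)
    rw [mkW, hr]
    simp only [List.headD_cons]
    rw [desL_cons, ← hr, desL_mkW ds]
    congr 1
    cases b <;> simp

lemma hInc_length : ∀ (c : ℕ) (ds : List Bool), (hInc c ds).length = ds.length
  | _, [] => rfl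
  | c, b :: ds => by rw [hInc, List.length_cons, hInc_length]; simp

lemma desL_getD {w : List ℕ} {i : ℕ} (hi : i + 1 < w.length) :
    (desL w).getD i false = decide (w.getD (i+1) 0 < w.getD i 0) := by
  rw [desL_eq_map, List.getD_eq_getElem _ _ (by simp; omega)]
  simp

lemma desSet_congr (w w' : List ℕ) (hl : w.length = w'.length) (hd : desL w = desL w') :
    desSet w = desSet w' := by
  unfold desSet
  ext i
  simp only [Finset.mem_filter, Finset.mem_range]
  have main : ∀ i, 0 < i → i < w.length →
      (w.getD i 0 < w.getD (i-1) 0 ↔ w'.getD i 0 < w'.getD (i-1) 0) := by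
    intro i h0 hn
    have e : i - 1 + 1 = i := by omega
    have H1 : (desL w).getD (i-1) false = decide (w.getD i 0 < w.getD (i-1) 0) := by
      rw [desL_getD (by omega : (i-1) + 1 < w.length), e]
    have H2 : (desL w').getD (i-1) false = decide (w'.getD i 0 < w'.getD (i-1) 0) := by
      rw [desL_getD (by omega : (i-1) + 1 < w'.length), e]
    have : decide (w.getD i 0 < w.getD (i-1) 0)
        = decide (w'.getD i 0 < w'.getD (i-1) 0) := by
      rw [← H1, ← H2, hd]
    exact decide_eq_decide.mp this
  constructor
  · rintro ⟨h1, h2, h3⟩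
    exact ⟨by omega, h2, (main i h2 h1).mp h3⟩
  · rintro ⟨h1, h2, h3⟩
    exact ⟨by omega, h2, (main i h2 (by omega)).mpr h3⟩

lemma descComp_congr (w w' : List ℕ) (hl : w.length = w'.length) (hd : desL w = desL w') :
    descComp w = descComp w' := by
  unfold descComp
  rw [hl, desSet_congr w w' hl hd]

lemma descComp_eq_G (w : List ℕ) (hw : w ≠ []) : descComp w = descComp (mkW (desL w)) := by
  apply descComp_congr
  · rw [mkW_length, desL_length]
    have : 0 < w.length := List.length_pos_iff.mpr hw
    omega
  · rw [desL_mkW]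

lemma mem_hsL {a : ℕ} {u' v w : List ℕ} (hw : w ∈ hsL (a :: u') v) :
    ∃ w₀, w = a :: w₀ ∧ w₀ ∈ sh u' v := by
  rw [hsL, Multiset.mem_map] at hw
  obtain ⟨w₀, hmem, rfl⟩ := hw
  exact ⟨w₀, rfl, hmem⟩

lemma final_step (a b a₂ b₂ : ℕ) (u' v' u₂' v₂' : List ℕ)
    (hdj : ∀ p ∈ a :: u', ∀ q ∈ b :: v', p ≠ q)
    (hdj₂ : ∀ p ∈ a₂ :: u₂', ∀ q ∈ b₂ :: v₂', p ≠ q)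
    (hul : u'.length = u₂'.length) (hvl : v'.length = v₂'.length)
    (hdu : desL (a :: u') = desL (a₂ :: u₂')) (hdv : desL (b :: v') = desL (b₂ :: v₂'))
    (hbit : a ≤ b ↔ a₂ ≤ b₂) :
    (hsL (a :: u') (b :: v')).map descComp = (hsL (a₂ :: u₂') (b₂ :: v₂')).map descComp := by
  have stepA : ∀ (x : ℕ) (uu vv : List ℕ), (hsL (x :: uu) vv).map descComp =
      ((hsL (x :: uu) vv).map desL).map (fun ds => descComp (mkW ds)) := by
    intro x uu vv
    rw [Multiset.map_map]
    apply Multiset.map_congr rfl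
    intro w hw
    obtain ⟨w₀, rfl, -⟩ := mem_hsL hw
    simpa [Function.comp] using descComp_eq_G (x :: w₀) (by simp)
  rw [stepA, stepA]
  congr 1
  apply inversion (u'.length + v'.length + 1)
  · intro d hd
    rw [Multiset.mem_map] at hd
    obtain ⟨w, hw, rfl⟩ := hd
    obtain ⟨w₀, rfl, hw₀⟩ := mem_hsL hw
    have hl := length_mem_sh _ _ _ hw₀
    rw [desL_length]
    simp only [List.length_cons]
    simp at hl ⊢
    omega
  · intro d hd
    rw [Multiset.mem_map] at hd
    obtain ⟨w, hw, rfl⟩ := hd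
    obtain ⟨w₀, rfl, hw₀⟩ := mem_hsL hw
    have hl := length_mem_sh _ _ _ hw₀
    rw [desL_length]
    simp only [List.length_cons]
    simp at hl ⊢
    omega
  · intro e he
    rw [countP_map', countP_map']
    have conv : ∀ (x : ℕ) (uu vv : List ℕ), uu.length + vv.length = u'.length + v'.length + 1 →
        (hsL (x :: uu) vv).countP (fun w => covB (desL w) e = true) =
        (hsL (x :: uu) vv).countP (fun w => List.Chain' Rv ((0 :: hInc 0 e).zip w)) := by
      intro x uu vv hlen2
      apply Multiset.countP_congr rfl
      intro w hw
      obtain ⟨w₀, rfl, hw₀⟩ := mem_hsL hw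
      have hl := length_mem_sh _ _ _ hw₀
      have hiff : List.Chain Rv (0, x) ((hInc 0 e).zip w₀) ↔ covB (desL (x :: w₀)) e = true :=
        compat_hInc e 0 x w₀ (by omega)
      exact propext (Iff.symm hiff)
    rw [conv a u' (b :: v') (by simp; omega), conv a₂ u₂' (b₂ :: v₂') (by simp; omega)]
    apply half_lemma a b a₂ b₂ u' v' u₂' v₂' _ hdj hdj₂ hul hvl hdu hdv hbit
    rw [List.length_cons, hInc_length, he]

lemma bound_map {w : List ℕ} {m x : ℕ} (hx : x ∈ (stdW w).map (· + m)) :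
    m + 1 ≤ x ∧ x ≤ w.length + m := by
  rw [List.mem_map] at hx
  obtain ⟨y, hy, rfl⟩ := hx
  have := stdW_bounds w hy
  omega

/-- If `u` and `v` are nonempty words on disjoint alphabets, the multiset of descent
compositions of the words of `u ≺′ v` equals that of `σ ≺′ τ`, where
`σ = std(u), τ = std(v)[|u|]` if `u₁ < v₁`, and `σ = std(u)[|v|], τ = std(v)` if
`u₁ > v₁`. -/
theorem descComp_half_shuffle_std (u v : List ℕ) (hu : u ≠ []) (hv : v ≠ [])
    (hdisj : ∀ x, x ∈ u → x ∉ v) :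
    (hsL u v).map descComp =
      (if u.headD 0 < v.headD 0
        then hsL (stdW u) ((stdW v).map (· + u.length))
        else hsL ((stdW u).map (· + v.length)) (stdW v)).map descComp := by
  obtain ⟨a, u', rfl⟩ := List.exists_cons_of_ne_nil hu
  obtain ⟨b, v', rfl⟩ := List.exists_cons_of_ne_nil hv
  have hab : a ≠ b := fun h => hdisj a List.mem_cons_self (h ▸ List.mem_cons_self)
  have hdj : ∀ p ∈ a :: u', ∀ q ∈ b :: v', p ≠ q := by
    intro p hp q hq h; exact hdisj p hp (h ▸ hq)
  simp only [List.headD_cons]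
  by_cases hlt : a < b
  · erw [if_pos hlt]
    have hσne : stdW (a :: u') ≠ [] := by
      intro h
      have h2 := stdW_length (a :: u'); rw [h] at h2; simp at h2
    have hτne : (stdW (b :: v')).map (· + (a :: u').length) ≠ [] := by
      intro h
      rw [List.map_eq_nil_iff] at h
      have h2 := stdW_length (b :: v'); rw [h] at h2; simp at h2
    obtain ⟨s, σ', hσ⟩ := List.exists_cons_of_ne_nil hσne
    obtain ⟨t, τ', hτ⟩ := List.exists_cons_of_ne_nil hτne
    rw [hσ, hτ]
    have hsb : 1 ≤ s ∧ s ≤ u'.length + 1 := by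
      have hm : s ∈ stdW (a :: u') := by rw [hσ]; exact List.mem_cons_self
      have := stdW_bounds _ hm
      simpa using this
    have htb : u'.length + 2 ≤ t ∧ t ≤ v'.length + 1 + (u'.length + 1) := by
      have hm : t ∈ (stdW (b :: v')).map (· + (a :: u').length) := by
        rw [hτ]; exact List.mem_cons_self
      have := bound_map hm
      simp at this; omega
    apply final_step a b s t u' v' σ' τ' hdj
    · intro p hp q hq
      have hp2 : p ∈ stdW (a :: u') := by rw [hσ]; exact hp
      have hq2 : q ∈ (stdW (b :: v')).map (· + (a :: u').length) := by rw [hτ]; exact hq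
      have b1 := stdW_bounds _ hp2
      have b2 := bound_map hq2
      simp only [List.length_cons] at b1 b2
      omega
    · have h2 := stdW_length (a :: u'); rw [hσ] at h2; simpa using h2.symm
    · have h2 : ((stdW (b :: v')).map (· + (a :: u').length)).length = v'.length + 1 := by
        simp [stdW_length]
      rw [hτ] at h2; simpa using h2.symm
    · rw [← hσ, desL_stdW]
    · rw [← hτ, desL_map_add, desL_stdW]
    · exact iff_of_true hlt.le (by omega)
  · erw [if_neg hlt]
    have hgt : b < a := by omega
    have hσne : (stdW (a :: u')).map (· + (b :: v').length) ≠ [] := by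
      intro h
      rw [List.map_eq_nil_iff] at h
      have h2 := stdW_length (a :: u'); rw [h] at h2; simp at h2
    have hτne : stdW (b :: v') ≠ [] := by
      intro h
      have h2 := stdW_length (b :: v'); rw [h] at h2; simp at h2
    obtain ⟨s, σ', hσ⟩ := List.exists_cons_of_ne_nil hσne
    obtain ⟨t, τ', hτ⟩ := List.exists_cons_of_ne_nil hτne
    rw [hσ, hτ]
    have hsb : v'.length + 2 ≤ s := by
      have hm : s ∈ (stdW (a :: u')).map (· + (b :: v').length) := by
        rw [hσ]; exact List.mem_cons_self
      have := bound_map hm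
      simp only [List.length_cons] at this
      omega
    have htb : t ≤ v'.length + 1 := by
      have hm : t ∈ stdW (b :: v') := by rw [hτ]; exact List.mem_cons_self
      have := stdW_bounds _ hm
      simp only [List.length_cons] at this
      omega
    apply final_step a b s t u' v' σ' τ' hdj
    · intro p hp q hq
      have hp2 : p ∈ (stdW (a :: u')).map (· + (b :: v').length) := by rw [hσ]; exact hp
      have hq2 : q ∈ stdW (b :: v') := by rw [hτ]; exact hq
      have b1 := bound_map hp2
      have b2 := stdW_bounds _ hq2
      simp only [List.length_cons] at b1 b2
      omega
    · have h2 : ((stdW (a :: u')).map (· + (b :: v').length)).length = u'.length + 1 := by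
        simp [stdW_length]
      rw [hσ] at h2; simpa using h2.symm
    · have h2 := stdW_length (b :: v'); rw [hτ] at h2; simpa using h2.symm
    · rw [← hσ, desL_map_add, desL_stdW]
    · rw [← hτ, desL_stdW]
    · exact iff_of_false (by omega) (by omega)
end
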